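/- arXiv:2009.03056 — 5 statements merged into one kernel-verified Lean document; each statement's English description precedes it below -/
import Mathlib

section
/- Let A be a finite subset of ℝ^m, a ∈ A, and P = conv(A). Then P equals the union over all affinely independent subsets B ⊆ A with a ∈ B and aff(B) = aff(A) of the sets conv(B). -/
open Set Filter Topology MeasureTheory ProbabilityTheory Pointwise

noncomputable section

/-- Coercion of an integer vector to a real vector. -/
def zc {m : ℕ} (x : Fin m → ℤ) : Fin m → ℝ := fun i => (x i : ℝ)

/-- Convex conical hull: all finite nonnegative real combinations of elements of `A`. -/
def coneHull {m : ℕ} (A : Set (Fin m → ℝ)) : Set (Fin m → ℝ) :=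
  { x | ∃ (s : Finset (Fin m → ℝ)) (w : (Fin m → ℝ) → ℝ),
      ↑s ⊆ A ∧ (∀ a ∈ s, 0 ≤ w a) ∧ x = ∑ a ∈ s, w a • a }


section Helpers
variable {E : Type*} [AddCommGroup E] [Module ℝ E]

lemma aindep_insert {s : Set E} {p : E}
    (hs : AffineIndependent ℝ (fun x : s => (x : E))) (hp : p ∉ affineSpan ℝ s) :
    AffineIndependent ℝ (fun x : (insert p s : Set E) => (x : E)) := by
  have hps : p ∉ s := fun h => hp (mem_affineSpan ℝ h)
  set i : (insert p s : Set E) := ⟨p, Set.mem_insert _ _⟩ with hidef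
  let e : s ≃ {y : (insert p s : Set E) // y ≠ i} :=
    { toFun := fun x => ⟨⟨x.1, Set.mem_insert_of_mem _ x.2⟩, fun h => hps (by
        have h2 : (x : E) = p := congrArg Subtype.val h
        exact h2 ▸ x.2)⟩
      invFun := fun y => ⟨y.1.1, y.1.2.resolve_left (fun hc => y.2 (Subtype.ext hc))⟩
      left_inv := fun x => rfl
      right_inv := fun y => by ext; rfl }
  have key : AffineIndependent ℝ
      (fun y : {y : (insert p s : Set E) // y ≠ i} => ((y : (insert p s : Set E)) : E)) := by
    rw [← affineIndependent_equiv (k := ℝ) e]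
    have hcomp : ((fun y : {y : (insert p s : Set E) // y ≠ i} =>
        ((y : (insert p s : Set E)) : E)) ∘ e) = fun x : s => (x : E) := funext fun x => rfl
    rw [hcomp]
    exact hs
  have himg : (fun y : (insert p s : Set E) => (y : E)) '' {x | x ≠ i} = s := by
    ext z
    constructor
    · rintro ⟨x, hx, rfl⟩
      rcases x.2 with h | h
      · exact absurd (Subtype.ext h) hx
      · exact h
    · intro hz
      exact ⟨⟨z, Set.mem_insert_of_mem _ hz⟩, fun hc => hps (by
        have h2 : z = p := congrArg Subtype.val hc
        exact h2 ▸ hz), rfl⟩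
  have := key.affineIndependent_of_notMem_span (i := i) (by rw [himg]; exact hp)
  exact this

lemma exists_extend [DecidableEq E] (A : Finset E) : ∀ (n : ℕ) (D : Finset E), A.card - D.card ≤ n → D ⊆ A →
    AffineIndependent ℝ (fun x : (D : Set E) => (x : E)) →
    ∃ B : Finset E, D ⊆ B ∧ B ⊆ A ∧ AffineIndependent ℝ (fun x : (B : Set E) => (x : E)) ∧
      affineSpan ℝ (B : Set E) = affineSpan ℝ (A : Set E) := by
  intro n
  induction n with
  | zero =>
    intro D hcard hDA hD
    have : D = A := Finset.eq_of_subset_of_card_le hDA (by omega)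
    subst this
    exact ⟨D, subset_rfl, subset_rfl, hD, rfl⟩
  | succ n ih =>
    intro D hcard hDA hD
    by_cases h : ∀ p ∈ A, p ∈ affineSpan ℝ (D : Set E)
    · refine ⟨D, subset_rfl, hDA, hD, le_antisymm (affineSpan_mono ℝ (by exact_mod_cast hDA)) ?_⟩
      rw [affineSpan_le]
      intro p hp
      exact h p (by exact_mod_cast hp)
    · push_neg at h
      obtain ⟨p, hpA, hp⟩ := h
      have hpD : p ∉ D := fun hc => hp (mem_affineSpan ℝ (by exact_mod_cast hc))
      have hins : AffineIndependent ℝ (fun x : ((insert p D : Finset E) : Set E) => (x : E)) := by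
        rw [Finset.coe_insert]
        exact aindep_insert hD hp
      have hsub : insert p D ⊆ A := Finset.insert_subset hpA hDA
      have hcard' : A.card - (insert p D).card ≤ n := by
        rw [Finset.card_insert_of_notMem hpD]
        have := Finset.card_lt_card (Finset.ssubset_iff_of_subset hDA |>.mpr ⟨p, hpA, hpD⟩)
        omega
      obtain ⟨B, hB1, hB2, hB3, hB4⟩ := ih (insert p D) hcard' hsub hins
      exact ⟨B, (Finset.subset_insert _ _).trans hB1, hB2, hB3, hB4⟩

end Helpers

section Key

variable {E : Type*} [NormedAddCommGroup E] [NormedSpace ℝ E]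

lemma key_lemma [DecidableEq E] (A : Finset E) (a : E) (ha : a ∈ A)
    {x : E} (hx : x ∈ convexHull ℝ (A : Set E)) :
    ∃ D : Finset E, D ⊆ A ∧ a ∈ D ∧ AffineIndependent ℝ (fun z : (D : Set E) => (z : E)) ∧
      x ∈ convexHull ℝ (D : Set E) := by
  by_cases hxa : x = a
  · refine ⟨{a}, by simpa using ha, Finset.mem_singleton_self a, ?_, ?_⟩
    · rw [Finset.coe_singleton]
      exact affineIndependent_of_subsingleton ℝ _
    · rw [Finset.coe_singleton, convexHull_singleton]
      exact hxa
  -- the ray from a through x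
  set f : ℝ → E := fun t => a + t • (x - a) with hf
  have hfc : Continuous f := continuous_const.add (continuous_id.smul continuous_const)
  set K := convexHull ℝ (A : Set E) with hK
  have hKcpt : IsCompact K := A.finite_toSet.isCompact_convexHull ℝ
  set T : Set ℝ := Set.Ici (0:ℝ) ∩ f ⁻¹' K with hT
  have hT1 : (1:ℝ) ∈ T := by
    refine Set.mem_inter (Set.mem_Ici.mpr zero_le_one) ?_
    have h1 : f 1 = x := by rw [hf]; simp
    rw [Set.mem_preimage, h1]
    exact hx
  have hTclosed : IsClosed T := isClosed_Ici.inter (hKcpt.isClosed.preimage hfc)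
  have hxa' : (0:ℝ) < ‖x - a‖ := by
    rw [norm_pos_iff]
    exact sub_ne_zero.mpr hxa
  obtain ⟨R, hR⟩ := hKcpt.isBounded.subset_closedBall 0
  have hTbdd : BddAbove T := by
    refine ⟨(R + ‖a‖) / ‖x - a‖, fun t ht => ?_⟩
    have h1 : ‖f t‖ ≤ R := by simpa using hR ht.2
    have h2 : ‖t • (x - a)‖ - ‖a‖ ≤ ‖f t‖ := by
      calc ‖t • (x - a)‖ - ‖a‖ ≤ ‖a + t • (x - a)‖ := by
            have := norm_add_le (-(a)) (a + t • (x - a))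
            simp only [neg_add_cancel_left, norm_neg] at this
            linarith
        _ = ‖f t‖ := rfl
    rw [norm_smul, Real.norm_eq_abs, abs_of_nonneg ht.1] at h2
    rw [le_div_iff₀ hxa']
    nlinarith
  set ts := sSup T with hts
  have htsT : ts ∈ T := hTclosed.csSup_mem ⟨1, hT1⟩ hTbdd
  have hts1 : 1 ≤ ts := le_csSup hTbdd hT1
  set y := f ts with hy
  have hyK : y ∈ K := htsT.2
  have hts0 : ts ≠ 0 := by linarith
  have hxseg : x = (1 - ts⁻¹) • a + ts⁻¹ • y := by
    rw [hy, hf]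
    simp only [smul_add, smul_smul]
    rw [inv_mul_cancel₀ hts0]
    module
  -- Caratheodory on y
  rw [hK, convexHull_eq_union] at hyK
  simp only [Set.mem_iUnion, exists_prop] at hyK
  obtain ⟨t, htA, htind, hyt⟩ := hyK
  rw [Finset.convexHull_eq] at hyt
  obtain ⟨w, hw0, hw1, hwy⟩ := hyt
  set t' : Finset E := t.filter (fun c => w c ≠ 0) with ht'
  have ht'sub : t' ⊆ t := Finset.filter_subset _ _
  have ht'pos : ∀ c ∈ t', 0 < w c := fun c hc => by
    have := Finset.mem_filter.mp hc
    exact lt_of_le_of_ne (hw0 c this.1) (Ne.symm this.2)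
  have hw1' : ∑ c ∈ t', w c = 1 := by
    rw [ht', Finset.sum_filter_ne_zero, hw1]
  have hwy' : ∑ c ∈ t', w c • c = y := by
    rw [← hwy, Finset.centerMass_eq_of_sum_1 _ _ hw1]
    rw [ht', Finset.sum_filter_of_ne]
    · rfl
    · intro c _ hc hcw
      exact hc (by rw [hcw, zero_smul])
  have ht'ind : AffineIndependent ℝ (fun z : (t' : Set E) => (z : E)) :=
    htind.mono (by exact_mod_cast ht'sub)
  have ht'ne : t'.Nonempty := by
    rcases Finset.eq_empty_or_nonempty t' with h | h
    · rw [h] at hw1'; simp at hw1'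
    · exact h
  have ht'A : ↑t' ⊆ (A : Set E) := (Finset.coe_subset.mpr ht'sub).trans htA
  -- a is not in the affine span of t'
  have hnotin : a ∉ affineSpan ℝ (t' : Set E) := by
    intro haff
    rw [← Subtype.range_coe (s := (t' : Set E))] at haff
    obtain ⟨s, w', hw'1, hw'a⟩ := eq_affineCombination_of_mem_affineSpan haff
    rw [Finset.affineCombination_eq_linear_combination _ _ _ hw'1] at hw'a
    set u : E → ℝ := fun c => ∑ i ∈ s.filter (fun i => i.1 = c), w' i with hu
    have hmapsto : ∀ i ∈ s, (i : E) ∈ t' := fun i _ => Finset.mem_coe.mp i.2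
    have hu1 : ∑ c ∈ t', u c = 1 := by
      simp only [hu]
      rw [Finset.sum_fiberwise_of_maps_to hmapsto, hw'1]
    have hua : ∑ c ∈ t', u c • c = a := by
      rw [hw'a]
      rw [← Finset.sum_fiberwise_of_maps_to hmapsto (fun i => w' i • (i : E))]
      refine Finset.sum_congr rfl fun c _ => ?_
      simp only [hu]
      rw [Finset.sum_smul]
      refine Finset.sum_congr rfl fun i hi => ?_
      rw [(Finset.mem_filter.mp hi).2]
    -- choose small ε
    set ε : ℝ := t'.inf' ht'ne (fun c => w c / (|w c - u c| + 1)) with hε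
    have hεpos : 0 < ε := by
      rw [hε, Finset.lt_inf'_iff]
      intro c hc
      exact div_pos (ht'pos c hc) (by positivity)
    have hεle : ∀ c ∈ t', ε ≤ w c / (|w c - u c| + 1) := fun c hc =>
      Finset.inf'_le _ hc
    set v : E → ℝ := fun c => w c + ε * (w c - u c) with hv
    have hv0 : ∀ c ∈ t', 0 ≤ v c := by
      intro c hc
      have h1 : ε * |w c - u c| ≤ w c / (|w c - u c| + 1) * |w c - u c| :=
        mul_le_mul_of_nonneg_right (hεle c hc) (abs_nonneg _)
      have h2 : w c / (|w c - u c| + 1) * |w c - u c| ≤ w c := by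
        rw [div_mul_eq_mul_div, div_le_iff₀ (by positivity)]
        have := ht'pos c hc
        nlinarith [abs_nonneg (w c - u c)]
      have h3 : ε * (w c - u c) ≥ -(ε * |w c - u c|) := by
        have := neg_abs_le (w c - u c)
        nlinarith [hεpos.le]
      simp only [hv]
      nlinarith
    have hv1 : ∑ c ∈ t', v c = 1 := by
      simp only [hv]
      rw [Finset.sum_add_distrib, hw1', ← Finset.mul_sum, Finset.sum_sub_distrib, hw1', hu1]
      ring
    have hsubsum : ∑ c ∈ t', (w c - u c) • c = y - a := by
      simp only [sub_smul]
      rw [Finset.sum_sub_distrib, hwy', hua]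
    have hvz : ∑ c ∈ t', v c • c = y + ε • (y - a) := by
      simp only [hv, add_smul, mul_smul]
      rw [Finset.sum_add_distrib, hwy', ← Finset.smul_sum, hsubsum]
    have hzK : y + ε • (y - a) ∈ K := by
      have := Finset.centerMass_mem_convexHull t' hv0 (by rw [hv1]; norm_num)
        (fun c hc => ht'A (Finset.mem_coe.mpr hc))
      rwa [Finset.centerMass_eq_of_sum_1 _ _ hv1, hvz] at this
    have hzf : y + ε • (y - a) = f ((1 + ε) * ts) := by
      rw [hy, hf]
      simp only [add_sub_cancel_left]
      rw [smul_smul]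
      module
    have hmem : (1 + ε) * ts ∈ T := by
      refine Set.mem_inter (Set.mem_Ici.mpr ?_) ?_
      · have hts0' : (0:ℝ) ≤ ts := le_trans zero_le_one hts1
        nlinarith
      · rw [Set.mem_preimage, ← hzf]; exact hzK
    have hle : (1 + ε) * ts ≤ ts := le_csSup hTbdd hmem
    have hts_pos : (0:ℝ) < ts := lt_of_lt_of_le one_pos hts1
    have hexp : (1 + ε) * ts = ts + ε * ts := by ring
    rw [hexp] at hle
    have hmul := mul_pos hεpos hts_pos
    linarith
  -- conclude
  refine ⟨insert a t', ?_, Finset.mem_insert_self _ _, ?_, ?_⟩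
  · have htA2 : t ⊆ A := by exact_mod_cast htA
    exact Finset.insert_subset ha (ht'sub.trans htA2)
  · rw [Finset.coe_insert]
    exact aindep_insert ht'ind hnotin
  · have haD : a ∈ convexHull ℝ ((insert a t' : Finset E) : Set E) :=
      subset_convexHull _ _ (by simp)
    have hyD : y ∈ convexHull ℝ ((insert a t' : Finset E) : Set E) := by
      refine convexHull_mono (show (t' : Set E) ⊆ ((insert a t' : Finset E) : Set E) by
        rw [Finset.coe_insert]; exact Set.subset_insert _ _) ?_
      rw [Finset.convexHull_eq]
      refine ⟨w, fun c hc => (ht'pos c hc).le, hw1', ?_⟩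
      rw [Finset.centerMass_eq_of_sum_1 _ _ hw1']
      simpa using hwy'
    rw [hxseg]
    have h0 : (0:ℝ) ≤ ts⁻¹ := inv_nonneg.mpr (by linarith)
    have h1 : (0:ℝ) ≤ 1 - ts⁻¹ := by
      have h2 : ts⁻¹ ≤ 1 := by
        rw [inv_le_one_iff₀]
        right; exact hts1
      linarith
    exact (convex_convexHull ℝ _) haD hyD h1 h0 (by ring)

end Key

/-- stellar decomposition of a polytope `conv(A)` into simplices
`conv(B)` with `a ∈ B ⊆ A`, `B` affinely independent and `aff(B) = aff(A)`. -/
theorem stmt0 {m : ℕ} (A : Finset (Fin m → ℝ)) (a : Fin m → ℝ) (ha : a ∈ A) :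
    convexHull ℝ (A : Set (Fin m → ℝ)) =
      ⋃ (B : Finset (Fin m → ℝ)) (_ : B ⊆ A ∧ a ∈ B ∧
        AffineIndependent ℝ (fun p : {z // z ∈ B} => (p : Fin m → ℝ)) ∧
        affineSpan ℝ (B : Set (Fin m → ℝ)) = affineSpan ℝ (A : Set (Fin m → ℝ))),
        convexHull ℝ (B : Set (Fin m → ℝ)) := by
  classical
  ext x
  simp only [Set.mem_iUnion]
  constructor
  · intro hx
    obtain ⟨D, hDA, haD, hDind, hxD⟩ := key_lemma A a ha hx
    obtain ⟨B, hDB, hBA, hBind, hBspan⟩ := exists_extend A (A.card - D.card) D le_rfl hDA hDind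
    exact ⟨B, ⟨hBA, hDB haD, hBind, hBspan⟩, convexHull_mono (Finset.coe_subset.mpr hDB) hxD⟩
  · rintro ⟨B, ⟨hBA, -, -, -⟩, hxB⟩
    exact convexHull_mono (Finset.coe_subset.mpr hBA) hxB
end
end

section
/- Let A be a finite subset of ℝ^m, 0 ≠ a ∈ A, and C = cone(A) the convex conical hull of A. If C is pointed (i.e., C ∩ (−C) = {0}), then C equals the union over all subsets B ⊆ A with a ∈ B that form a basis of lin(A), of the cones cone(B). -/
open Set Filter Topology MeasureTheory ProbabilityTheory Pointwise

noncomputable section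

lemma coneHull_mono {A B : Set (Fin m → ℝ)} (h : A ⊆ B) : coneHull A ⊆ coneHull B := by
  rintro x ⟨s, w, hs, hw, hx⟩
  exact ⟨s, w, hs.trans h, hw, hx⟩

lemma mem_coneHull_iff (T : Finset (Fin m → ℝ)) (x : Fin m → ℝ) :
    x ∈ coneHull (T : Set (Fin m → ℝ)) ↔
      ∃ w : (Fin m → ℝ) → ℝ, (∀ b ∈ T, 0 ≤ w b) ∧ x = ∑ b ∈ T, w b • b := by
  classical
  constructor
  · rintro ⟨s, w, hs, hw, hx⟩
    have hsT : s ⊆ T := fun b hb => hs hb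
    refine ⟨fun b => if b ∈ s then w b else 0, fun b _ => ?_, ?_⟩
    · by_cases h : b ∈ s <;> simp [h]
      exact hw b h
    · rw [hx, ← Finset.sum_subset hsT]
      · exact Finset.sum_congr rfl fun b hb => by simp [hb]
      · intro b _ hb; simp [hb]
  · rintro ⟨w, hw, hx⟩
    exact ⟨T, w, subset_rfl, hw, hx⟩

/-- Pointedness contradiction: a nontrivial nonnegative relation with positive weight on `a`
forces `a = 0`. -/
lemma pt_contra {A T : Finset (Fin m → ℝ)} {a : Fin m → ℝ}
    (hpt : ∀ v, v ∈ coneHull (A : Set (Fin m → ℝ)) →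
      -v ∈ coneHull (A : Set (Fin m → ℝ)) → v = 0)
    (hTA : T ⊆ A) (haT : a ∈ T) (ha0 : a ≠ 0) (c : (Fin m → ℝ) → ℝ)
    (hrel : ∑ b ∈ T, c b • b = 0) (hnn : ∀ b ∈ T, b ≠ a → 0 ≤ c b) (hca : 0 < c a) : False := by
  classical
  have haA : a ∈ A := hTA haT
  have h1 : (c a • a) ∈ coneHull (A : Set (Fin m → ℝ)) := by
    refine ⟨{a}, c, ?_, ?_, ?_⟩ <;> simp [haA, hca.le]
  have h2 : -(c a • a) ∈ coneHull (A : Set (Fin m → ℝ)) := by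
    refine ⟨T.erase a, c, ?_, ?_, ?_⟩
    · intro b hb
      exact Finset.coe_subset.mpr hTA (Finset.erase_subset a T (by exact_mod_cast hb))
    · intro b hb
      exact hnn b (Finset.mem_of_mem_erase hb) (Finset.ne_of_mem_erase hb)
    · have := Finset.add_sum_erase T (fun b => c b • b) haT
      rw [hrel] at this
      simpa using (eq_neg_of_add_eq_zero_right this).symm
  have := hpt _ h1 h2
  have : a = 0 := by
    rcases smul_eq_zero.mp this with h | h
    · exact absurd h (ne_of_gt hca)
    · exact h
  exact ha0 this

/-- Exchange step: given a relation with nonpositive weight on `a` and some positive weight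
elsewhere, we can rewrite `x` over `T.erase b*` for some `b* ≠ a`. -/
lemma exchange {T : Finset (Fin m → ℝ)} {a : Fin m → ℝ} (haT : a ∈ T)
    (c w : (Fin m → ℝ) → ℝ) (hw : ∀ b ∈ T, 0 ≤ w b)
    (hrel : ∑ b ∈ T, c b • b = 0) (hca : c a ≤ 0)
    (hpos : ∃ b ∈ T, b ≠ a ∧ 0 < c b) :
    ∃ b' ∈ T, b' ≠ a ∧ (∑ b ∈ T, w b • b) ∈ coneHull ((T.erase b' : Finset (Fin m → ℝ)) :
      Set (Fin m → ℝ)) := by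
  classical
  set S := T.filter (fun b => b ≠ a ∧ 0 < c b) with hS
  have hSne : S.Nonempty := by
    obtain ⟨b, hb, hba, hcb⟩ := hpos
    exact ⟨b, Finset.mem_filter.mpr ⟨hb, hba, hcb⟩⟩
  obtain ⟨b', hb'S, hmin⟩ := Finset.exists_min_image S (fun b => w b / c b) hSne
  obtain ⟨hb'T, hb'a, hcb'⟩ := Finset.mem_filter.mp hb'S
  set t := w b' / c b' with ht
  have ht0 : 0 ≤ t := div_nonneg (hw b' hb'T) hcb'.le
  set w' := fun b => w b - t * c b with hw'
  have hw'0 : ∀ b ∈ T, 0 ≤ w' b := by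
    intro b hb
    by_cases hbS : b ∈ S
    · obtain ⟨_, _, hcb⟩ := Finset.mem_filter.mp hbS
      have h1 : t ≤ w b / c b := hmin b hbS
      have : t * c b ≤ w b := by
        have := mul_le_mul_of_nonneg_right h1 hcb.le
        rwa [div_mul_cancel₀ _ (ne_of_gt hcb)] at this
      simp [hw']; linarith
    · have hcb : c b ≤ 0 := by
        have hn : ¬(b ≠ a ∧ 0 < c b) := fun h => hbS (Finset.mem_filter.mpr ⟨hb, h⟩)
        by_cases hba : b = a
        · rw [hba]; exact hca
        · push_neg at hn; exact hn hba
      have : t * c b ≤ 0 := mul_nonpos_of_nonneg_of_nonpos ht0 hcb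
      have := hw b hb
      simp [hw']; linarith
  have hwb' : w' b' = 0 := by
    simp [hw', ht, div_mul_cancel₀ _ (ne_of_gt hcb')]
  have hsum : ∑ b ∈ T, w b • b = ∑ b ∈ T, w' b • b := by
    have : ∑ b ∈ T, w' b • b = ∑ b ∈ T, w b • b - t • ∑ b ∈ T, c b • b := by
      rw [Finset.smul_sum, ← Finset.sum_sub_distrib]
      exact Finset.sum_congr rfl fun b _ => by rw [hw', sub_smul, smul_smul]
    rw [this, hrel, smul_zero, sub_zero]
  refine ⟨b', hb'T, hb'a, ?_⟩
  rw [mem_coneHull_iff]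
  refine ⟨w', fun b hb => hw'0 b (Finset.mem_of_mem_erase hb), ?_⟩
  rw [hsum, ← Finset.sum_erase T (by rw [hwb', zero_smul])]

lemma key {A : Finset (Fin m → ℝ)} {a : Fin m → ℝ} (ha0 : a ≠ 0)
    (hpt : ∀ v, v ∈ coneHull (A : Set (Fin m → ℝ)) →
      -v ∈ coneHull (A : Set (Fin m → ℝ)) → v = 0) :
    ∀ (n : ℕ) (T : Finset (Fin m → ℝ)), T.card ≤ n → T ⊆ A → a ∈ T →
      ∀ x ∈ coneHull (T : Set (Fin m → ℝ)), ∃ T' : Finset (Fin m → ℝ), T' ⊆ T ∧ a ∈ T' ∧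
        LinearIndependent ℝ (fun p : {z // z ∈ T'} => (p : Fin m → ℝ)) ∧
        x ∈ coneHull (T' : Set (Fin m → ℝ)) := by
  classical
  intro n
  induction n with
  | zero =>
    intro T hc _ haT
    have := Finset.card_pos.mpr ⟨a, haT⟩
    omega
  | succ n ih =>
    intro T hc hTA haT x hx
    by_cases hind : LinearIndependent ℝ (fun p : {z // z ∈ T} => (p : Fin m → ℝ))
    · exact ⟨T, subset_rfl, haT, hind, hx⟩
    obtain ⟨g, hg0, i0, hi0⟩ := Fintype.not_linearIndependent_iff.mp hind
    set c : (Fin m → ℝ) → ℝ := fun b => if h : b ∈ T then g ⟨b, h⟩ else 0 with hcdef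
    have hcval : ∀ (i : {z // z ∈ T}), c ↑i = g i := by
      intro i; simp [hcdef, i.2]
    have hrel : ∑ b ∈ T, c b • b = 0 := by
      rw [← Finset.sum_coe_sort T (fun b => c b • b), ← hg0]
      exact Finset.sum_congr rfl fun i _ => by rw [hcval]
    have hrelneg : ∑ b ∈ T, (-(c b)) • b = 0 := by
      have : ∑ b ∈ T, (-(c b)) • b = -∑ b ∈ T, c b • b := by
        rw [← Finset.sum_neg_distrib]
        exact Finset.sum_congr rfl fun b _ => by rw [neg_smul]
      rw [this, hrel, neg_zero]
    have hci0 : c ↑i0 ≠ 0 := by rw [hcval]; exact hi0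
    obtain ⟨w, hw, hxw⟩ := (mem_coneHull_iff T x).mp hx
    have step : ∀ d : (Fin m → ℝ) → ℝ, (∑ b ∈ T, d b • b = 0) → d a ≤ 0 →
        (∃ b ∈ T, b ≠ a ∧ 0 < d b) →
        ∃ T' : Finset (Fin m → ℝ), T' ⊆ T ∧ a ∈ T' ∧
          LinearIndependent ℝ (fun p : {z // z ∈ T'} => (p : Fin m → ℝ)) ∧
          x ∈ coneHull (T' : Set (Fin m → ℝ)) := by
      intro d hdrel hda hdpos
      obtain ⟨b', hb'T, hb'a, hmem⟩ := exchange haT d w hw hdrel hda hdpos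
      rw [← hxw] at hmem
      have hcard : (T.erase b').card ≤ n :=
        Nat.le_of_lt_succ (lt_of_lt_of_le (Finset.card_erase_lt_of_mem hb'T) hc)
      obtain ⟨T', h1, h2, h3, h4⟩ := ih (T.erase b') hcard
        ((Finset.erase_subset _ _).trans hTA)
        (Finset.mem_erase.mpr ⟨fun h => hb'a h.symm, haT⟩) x hmem
      exact ⟨T', h1.trans (Finset.erase_subset _ _), h2, h3, h4⟩
    rcases lt_trichotomy (c a) 0 with h | h | h
    · by_cases hpos : ∃ b ∈ T, b ≠ a ∧ 0 < c b
      · exact step c hrel h.le hpos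
      · push_neg at hpos
        exact (pt_contra hpt hTA haT ha0 (fun b => -(c b)) hrelneg
          (fun b hb hba => by simpa using hpos b hb hba) (by simpa using h)).elim
    · by_cases hpos : ∃ b ∈ T, b ≠ a ∧ 0 < c b
      · exact step c hrel h.le hpos
      · by_cases hneg : ∃ b ∈ T, b ≠ a ∧ c b < 0
        · obtain ⟨b, hb, hba, hcb⟩ := hneg
          exact step (fun b => -(c b)) hrelneg (by simp [h]) ⟨b, hb, hba, by simpa using hcb⟩
        · push_neg at hpos hneg
          refine absurd hci0 ?_
          by_cases hia : (↑i0 : Fin m → ℝ) = a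
          · rw [hia, h]; simp
          · have h1 := hpos ↑i0 i0.2 hia
            have h2 := hneg ↑i0 i0.2 hia
            simp only [ne_eq, not_not]
            linarith
    · by_cases hneg : ∃ b ∈ T, b ≠ a ∧ c b < 0
      · obtain ⟨b, hb, hba, hcb⟩ := hneg
        exact step (fun b => -(c b)) hrelneg (by simp only [neg_nonpos]; linarith)
          ⟨b, hb, hba, by simpa using hcb⟩
      · push_neg at hneg
        exact (pt_contra hpt hTA haT ha0 c hrel (fun b hb hba => hneg b hb hba) h).elim

/-- a pointed finitely generated cone is the union of the simplicial
cones `cone(B)` over subsets `B ⊆ A` containing `a` which are bases of `lin(A)`. -/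
theorem stmt1 {m : ℕ} (A : Finset (Fin m → ℝ)) (a : Fin m → ℝ) (ha : a ∈ A) (ha0 : a ≠ 0)
    (hpointed : coneHull (A : Set (Fin m → ℝ)) ∩ (-(coneHull (A : Set (Fin m → ℝ)))) = {0}) :
    coneHull (A : Set (Fin m → ℝ)) =
      ⋃ (B : Finset (Fin m → ℝ)) (_ : B ⊆ A ∧ a ∈ B ∧
        LinearIndependent ℝ (fun p : {z // z ∈ B} => (p : Fin m → ℝ)) ∧
        Submodule.span ℝ (B : Set (Fin m → ℝ)) = Submodule.span ℝ (A : Set (Fin m → ℝ))),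
        coneHull (B : Set (Fin m → ℝ)) := by

  classical
  have hpt : ∀ v, v ∈ coneHull (A : Set (Fin m → ℝ)) →
      -v ∈ coneHull (A : Set (Fin m → ℝ)) → v = 0 := by
    intro v h1 h2
    have hv : v ∈ coneHull (A : Set (Fin m → ℝ)) ∩ (-(coneHull (A : Set (Fin m → ℝ)))) :=
      ⟨h1, by simpa [Set.mem_neg] using h2⟩
    rw [hpointed] at hv
    simpa using hv
  apply Set.Subset.antisymm
  · intro x hx
    obtain ⟨T', hT'A, haT', hind, hxT'⟩ := key ha0 hpt A.card A le_rfl subset_rfl ha x hx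
    have hindset : LinearIndepOn ℝ id
        ((T' : Set (Fin m → ℝ))) := hind
    have hsub : (T' : Set (Fin m → ℝ)) ⊆ (A : Set (Fin m → ℝ)) := Finset.coe_subset.mpr hT'A
    set B0 := hindset.extend hsub with hB0def
    have hB0A : B0 ⊆ (A : Set (Fin m → ℝ)) := hindset.extend_subset hsub
    have hT'B0 : (T' : Set (Fin m → ℝ)) ⊆ B0 := hindset.subset_extend hsub
    have hfin : B0.Finite := A.finite_toSet.subset hB0A
    set B := hfin.toFinset with hBdef
    have hBeq : (B : Set (Fin m → ℝ)) = B0 := hfin.coe_toFinset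
    have hindB0 : LinearIndependent ℝ (fun p : B0 => (p : Fin m → ℝ)) :=
      hindset.linearIndepOn_extend hsub
    rw [← hBeq] at hindB0
    have hBA : B ⊆ A := by
      intro b hb
      have : b ∈ (B : Set (Fin m → ℝ)) := hb
      exact hB0A (hBeq ▸ this)
    have haB : a ∈ B := by
      have : a ∈ (B : Set (Fin m → ℝ)) := hBeq ▸ hT'B0 (by exact_mod_cast haT')
      exact_mod_cast this
    have hspan : Submodule.span ℝ (B : Set (Fin m → ℝ)) =
        Submodule.span ℝ (A : Set (Fin m → ℝ)) := by
      apply le_antisymm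
      · exact Submodule.span_mono (by exact_mod_cast hBA)
      · rw [hBeq]
        exact Submodule.span_le.mpr (hindset.subset_span_extend hsub)
    refine Set.mem_iUnion.mpr ⟨B, Set.mem_iUnion.mpr ⟨⟨hBA, haB, hindB0, hspan⟩, ?_⟩⟩
    have hT'B : T' ⊆ B := by
      intro b hb
      have : b ∈ (B : Set (Fin m → ℝ)) := hBeq ▸ hT'B0 (by exact_mod_cast hb)
      exact_mod_cast this
    exact coneHull_mono (Finset.coe_subset.mpr hT'B) hxT'
  · intro x hx
    obtain ⟨B, hB⟩ := Set.mem_iUnion.mp hx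
    obtain ⟨hBprop, hxB⟩ := Set.mem_iUnion.mp hB
    exact coneHull_mono (Finset.coe_subset.mpr hBprop.1) hxB
end
end

section
/- For any finite set A ⊆ ℤ^m there exists a natural number d ≥ 1 such that d·x ∈ sg(A) for every x ∈ cone(A) ∩ ℤ^m, where sg(A) = ℤ₊a₁ + ⋯ + ℤ₊a_k is the semigroup generated by A and cone(A) is the convex conical hull of A in ℝ^m. -/
open Set Filter Topology MeasureTheory ProbabilityTheory Pointwise

noncomputable section

open Matrix

lemma zc_inj {m : ℕ} : Function.Injective (zc (m := m)) := by
  intro x y h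
  funext i
  have := congrFun h i
  simpa [zc] using this

/-- Integer Gram matrix of a finite set of integer vectors. -/
def gram {m : ℕ} (T : Finset (Fin m → ℤ)) : Matrix {a // a ∈ T} {a // a ∈ T} ℤ :=
  fun a b => ∑ i, a.1 i * b.1 i

/-- Carathéodory's theorem for cones. -/
lemma cone_carath {V : Type*} [AddCommGroup V] [Module ℝ V] :
    ∀ (n : ℕ) (s : Finset V), s.card ≤ n → ∀ w : V → ℝ, (∀ a ∈ s, 0 ≤ w a) →
    ∃ t : Finset V, t ⊆ s ∧ LinearIndependent ℝ (fun a : {x // x ∈ t} => (a : V)) ∧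
      ∃ u : V → ℝ, (∀ a ∈ t, 0 ≤ u a) ∧ ∑ a ∈ t, u a • a = ∑ a ∈ s, w a • a := by
  intro n
  induction n with
  | zero =>
    intro s hs w _
    have : s = ∅ := Finset.card_eq_zero.mp (Nat.le_zero.mp hs)
    subst this
    refine ⟨∅, subset_rfl, ?_, 0, by simp, by simp⟩
    have : IsEmpty {x : V // x ∈ (∅ : Finset V)} := ⟨fun a => (Finset.notMem_empty _ a.2)⟩
    exact linearIndependent_empty_type
  | succ n ih =>
    intro s hs w hw
    classical
    by_cases hli : LinearIndependent ℝ (fun a : {x // x ∈ s} => (a : V))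
    · exact ⟨s, subset_rfl, hli, w, hw, rfl⟩
    · obtain ⟨g, hg0, i, hgi⟩ := Fintype.not_linearIndependent_iff.mp hli
      obtain ⟨c, hcs, a₁, ha₁s, ha₁pos⟩ :
          ∃ c : V → ℝ, (∑ a ∈ s, c a • a = 0) ∧ ∃ a ∈ s, 0 < c a := by
        rcases lt_trichotomy (g i) 0 with hneg | hzero | hpos
        · refine ⟨fun a => if h : a ∈ s then -g ⟨a, h⟩ else 0, ?_, i.1, i.2, ?_⟩
          · rw [← Finset.sum_coe_sort s]
            simpa using congrArg Neg.neg hg0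
          · simp only [dif_pos i.2]
            simpa using hneg
        · exact absurd hzero hgi
        · refine ⟨fun a => if h : a ∈ s then g ⟨a, h⟩ else 0, ?_, i.1, i.2, ?_⟩
          · rw [← Finset.sum_coe_sort s]
            simpa using hg0
          · simp only [dif_pos i.2]
            simpa using hpos
      set P : Finset V := s.filter (fun a => 0 < c a) with hP
      have hPne : P.Nonempty := ⟨a₁, by simp [hP, ha₁s, ha₁pos]⟩
      obtain ⟨a₀, ha₀P, hmin⟩ := P.exists_mem_eq_inf' hPne (fun a => w a / c a)
      set lam : ℝ := P.inf' hPne (fun a => w a / c a) with hlam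
      have ha₀s : a₀ ∈ s := (Finset.mem_filter.mp ha₀P).1
      have hc₀ : 0 < c a₀ := (Finset.mem_filter.mp ha₀P).2
      have hlam0 : 0 ≤ lam := by
        rw [hmin]
        exact div_nonneg (hw _ ha₀s) hc₀.le
      set u : V → ℝ := fun a => w a - lam * c a with hu
      have hu0 : ∀ a ∈ s, 0 ≤ u a := by
        intro a ha
        by_cases hca : 0 < c a
        · have hlle : lam ≤ w a / c a := Finset.inf'_le _ (Finset.mem_filter.mpr ⟨ha, hca⟩)
          have := (le_div_iff₀ hca).mp hlle
          simpa [hu] using this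
        · have h1 : lam * c a ≤ 0 := mul_nonpos_of_nonneg_of_nonpos hlam0 (not_lt.mp hca)
          have h2 := hw a ha
          simp only [hu]
          linarith
      have hu0' : u a₀ = 0 := by
        simp only [hu, hmin]
        field_simp
        ring
      have hsum : ∑ a ∈ s.erase a₀, u a • a = ∑ a ∈ s, w a • a := by
        rw [Finset.sum_erase _ (by rw [hu0', zero_smul])]
        have : ∀ a, u a • a = w a • a - lam • (c a • a) := by
          intro a; simp [hu, sub_smul, smul_smul]
        simp_rw [this, Finset.sum_sub_distrib, ← Finset.smul_sum, hcs, smul_zero, sub_zero]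
      have hcard : (s.erase a₀).card ≤ n := by
        have := Finset.card_erase_of_mem ha₀s
        omega
      obtain ⟨t, hts, hli', u', hu', hsum'⟩ :=
        ih (s.erase a₀) hcard u (fun a ha => hu0 a (Finset.mem_of_mem_erase ha))
      exact ⟨t, hts.trans (Finset.erase_subset _ _), hli', u', hu', hsum'.trans hsum⟩

lemma key_s3 {m : ℕ} (A : Finset (Fin m → ℤ)) (x : Fin m → ℤ)
    (hx : zc x ∈ coneHull (zc '' (A : Set (Fin m → ℤ)))) :
    ∃ T ∈ A.powerset, (_root_.gram T).det ≠ 0 ∧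
      ((_root_.gram T).det.natAbs : ℤ) • x ∈ AddSubmonoid.closure (A : Set (Fin m → ℤ)) := by
  classical
  obtain ⟨s, w, hsA, hw, hxe⟩ := hx
  obtain ⟨t, hts, hli, u, hu, hsum⟩ := cone_carath s.card s le_rfl w hw
  have hxt : zc x = ∑ a ∈ t, u a • a := by rw [hxe, ← hsum]
  have htA : (t : Set (Fin m → ℝ)) ⊆ zc '' (A : Set (Fin m → ℤ)) :=
    (Finset.coe_subset.mpr hts).trans hsA
  set T : Finset (Fin m → ℤ) := A.filter (fun a => zc a ∈ t) with hT
  have hTA : T ⊆ A := Finset.filter_subset _ _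
  have himg : T.image zc = t := by
    ext b
    simp only [Finset.mem_image, hT, Finset.mem_filter]
    constructor
    · rintro ⟨a, ⟨_, hat⟩, rfl⟩; exact hat
    · intro hb
      obtain ⟨a, haA, rfl⟩ := htA hb
      exact ⟨a, ⟨haA, hb⟩, rfl⟩
  set BR : Matrix (Fin m) {a // a ∈ T} ℝ := Matrix.of (fun i a => zc a.1 i) with hBR
  set GR : Matrix {a // a ∈ T} {a // a ∈ T} ℝ := (_root_.gram T).map (fun z => (z : ℝ)) with hGR
  have hGRB : GR = BRᵀ * BR := by
    ext a b
    simp only [hGR, hBR, Matrix.map_apply, Matrix.mul_apply, Matrix.transpose_apply,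
      Matrix.of_apply, _root_.gram, zc]
    push_cast
    rfl
  set c : {a // a ∈ T} → ℝ := fun a => u (zc a.1) with hc
  have hc0 : ∀ a, 0 ≤ c a := by
    intro a
    apply hu
    exact (Finset.mem_filter.mp a.2).2
  have hBc : BR *ᵥ c = zc x := by
    funext i
    rw [hxt, ← himg, Finset.sum_image (fun a _ b _ h => zc_inj h)]
    rw [← Finset.sum_attach T (fun a => u (zc a) • zc a)]
    simp [Matrix.mulVec, dotProduct, hBR, hc, mul_comm]
  have hliT : LinearIndependent ℝ (fun a : {a // a ∈ T} => zc a.1) := by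
    have := hli.comp (fun a : {a // a ∈ T} =>
        (⟨zc a.1, by rw [← himg]; exact Finset.mem_image_of_mem _ a.2⟩ : {b // b ∈ t}))
      (fun a b h => Subtype.ext (zc_inj (congrArg Subtype.val h)))
    exact this
  have hker : ∀ y, GR *ᵥ y = 0 → y = 0 := by
    intro y hy
    have hBy : BR *ᵥ y = 0 := by
      rw [hGRB] at hy
      have h1 := congrArg (fun v => y ⬝ᵥ v) hy
      simp only [dotProduct_zero] at h1
      rw [← Matrix.mulVec_mulVec, dotProduct_mulVec, Matrix.vecMul_transpose] at h1
      rw [dotProduct] at h1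
      funext i
      have h2 := (Finset.sum_eq_zero_iff_of_nonneg
        (fun j _ => mul_self_nonneg ((BR *ᵥ y) j))).mp h1
      have := mul_self_eq_zero.mp (h2 i (Finset.mem_univ i))
      simpa using this
    have hcomb : ∑ a, y a • (fun i => zc a.1 i) = (0 : Fin m → ℝ) := by
      funext i
      rw [Finset.sum_apply]
      have : (BR *ᵥ y) i = 0 := by rw [hBy]; rfl
      rw [Matrix.mulVec, dotProduct] at this
      simpa [hBR, mul_comm] using this
    have := Fintype.linearIndependent_iff.mp hliT y (by simpa using hcomb)
    funext a; exact this a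
  have hinj : Function.Injective (GR.mulVec) := by
    intro y z h
    have := hker (y - z) (by rw [Matrix.mulVec_sub, h, sub_self])
    exact sub_eq_zero.mp this
  have hdetu : IsUnit GR.det := by
    rw [← Matrix.isUnit_iff_isUnit_det]
    exact Matrix.mulVec_injective_iff_isUnit.mp hinj
  have hdetcast : GR.det = ((_root_.gram T).det : ℝ) := by
    rw [hGR]
    exact ((Int.castRingHom ℝ).map_det (_root_.gram T)).symm
  have hdetz : (_root_.gram T).det ≠ 0 := by
    intro h0
    rw [hdetcast, h0] at hdetu
    simp at hdetu
  -- integer right-hand side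
  set bz : {a // a ∈ T} → ℤ := fun a => ∑ i, a.1 i * x i with hbz
  have hGc : GR *ᵥ c = fun a => ((bz a : ℤ) : ℝ) := by
    rw [hGRB, ← Matrix.mulVec_mulVec, hBc]
    funext a
    simp only [Matrix.mulVec, dotProduct, Matrix.transpose_apply, hBR, Matrix.of_apply,
      hbz, zc]
    push_cast
    rfl
  set N : {a // a ∈ T} → ℤ := (_root_.gram T).adjugate *ᵥ bz with hN
  have hNc : ∀ a, ((N a : ℤ) : ℝ) = ((_root_.gram T).det : ℝ) * c a := by
    have hmap : (fun a => ((N a : ℤ) : ℝ)) = GR.adjugate *ᵥ (fun a => ((bz a : ℤ) : ℝ)) := by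
      funext a
      have hadj : GR.adjugate = ((_root_.gram T).adjugate).map (fun z => (z : ℝ)) := by
        have h := (Int.castRingHom ℝ).map_adjugate (_root_.gram T)
        simp only [RingHom.mapMatrix_apply] at h
        rw [hGR]
        exact h.symm
      rw [hadj]
      simp only [hN, Matrix.mulVec, dotProduct, Matrix.map_apply]
      push_cast
      rfl
    intro a
    have := congrFun hmap a
    rw [this, ← hGc, Matrix.mulVec_mulVec, Matrix.adjugate_mul, hdetcast,
      Matrix.smul_mulVec, Matrix.one_mulVec]
    rfl
  set D : ℤ := (_root_.gram T).det with hD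
  set ε : ℤ := if 0 < D then 1 else -1 with hε
  have hεD : (D.natAbs : ℤ) = ε * D := by
    rcases lt_trichotomy D 0 with h | h | h
    · rw [hε, if_neg (by omega)]
      omega
    · exact absurd h hdetz
    · rw [hε, if_pos h]
      omega
  set M : {a // a ∈ T} → ℤ := fun a => ε * N a with hM
  have hM0 : ∀ a, 0 ≤ M a := by
    intro a
    have : ((M a : ℤ) : ℝ) = ((D.natAbs : ℤ) : ℝ) * c a := by
      rw [hM, hεD]
      simp only [Int.cast_mul]
      rw [hNc a]
      ring
    have hnn : (0 : ℝ) ≤ ((M a : ℤ) : ℝ) := by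
      rw [this]
      exact mul_nonneg (by positivity) (hc0 a)
    exact_mod_cast hnn
  have hrep : ((D.natAbs : ℤ)) • x = ∑ a : {a // a ∈ T}, M a • a.1 := by
    funext i
    have hcast : ∀ a : {a // a ∈ T}, ((M a : ℤ) : ℝ) * ((a.1 i : ℤ) : ℝ)
        = ((D.natAbs : ℤ) : ℝ) * (c a * zc a.1 i) := by
      intro a
      have h1 : ((M a : ℤ) : ℝ) = ((D.natAbs : ℤ) : ℝ) * c a := by
        rw [hM, hεD]
        simp only [Int.cast_mul]
        rw [hNc a]
        ring
      rw [h1, zc]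
      ring
    have hR : ((D.natAbs : ℤ) : ℝ) * ((x i : ℤ) : ℝ)
        = ∑ a : {a // a ∈ T}, ((M a : ℤ) : ℝ) * ((a.1 i : ℤ) : ℝ) := by
      calc ((D.natAbs : ℤ) : ℝ) * (x i : ℝ)
          = ((D.natAbs : ℤ) : ℝ) * (BR *ᵥ c) i := by rw [hBc]; rfl
        _ = ∑ a : {a // a ∈ T}, ((D.natAbs : ℤ) : ℝ) * (c a * zc a.1 i) := by
            rw [Matrix.mulVec, dotProduct, Finset.mul_sum]
            refine Finset.sum_congr rfl fun a _ => ?_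
            simp only [hBR, Matrix.of_apply]
            ring
        _ = ∑ a : {a // a ∈ T}, ((M a : ℤ) : ℝ) * ((a.1 i : ℤ) : ℝ) := by
            refine Finset.sum_congr rfl fun a _ => (hcast a).symm
    have hfin : (((((D.natAbs : ℤ)) • x) i : ℤ) : ℝ)
        = (((∑ a : {a // a ∈ T}, M a • a.1) i : ℤ) : ℝ) := by
      simp only [Pi.smul_apply, smul_eq_mul, Finset.sum_apply, Int.cast_mul, Int.cast_sum]
      exact hR
    exact_mod_cast hfin
  refine ⟨T, Finset.mem_powerset.mpr hTA, hdetz, ?_⟩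
  rw [← hD, hrep]
  apply AddSubmonoid.sum_mem
  intro a _
  have haA : a.1 ∈ (A : Set (Fin m → ℤ)) := by
    exact_mod_cast hTA a.2
  rw [← Int.toNat_of_nonneg (hM0 a), natCast_zsmul]
  exact nsmul_mem (AddSubmonoid.subset_closure haA) ((M a).toNat)

/-- for a finite `A ⊆ ℤ^m` there is `d ≥ 1` with `d·x ∈ sg(A)` for
every integer point `x` of `cone(A)`. -/
theorem stmt3 {m : ℕ} (A : Finset (Fin m → ℤ)) :
    ∃ d : ℕ, 1 ≤ d ∧ ∀ x : Fin m → ℤ,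
      zc x ∈ coneHull (zc '' (A : Set (Fin m → ℤ))) →
      (d : ℤ) • x ∈ AddSubmonoid.closure (A : Set (Fin m → ℤ)) := by
  classical
  refine ⟨∏ T ∈ A.powerset, ((_root_.gram T).det.natAbs ⊔ 1), ?_, ?_⟩
  · exact Finset.one_le_prod' (fun T _ => le_max_right _ _)
  · intro x hx
    obtain ⟨T, hTp, hdet, hmem⟩ := key_s3 A x hx
    set k : ℕ := (_root_.gram T).det.natAbs with hk
    have hk1 : 1 ≤ k := by
      rw [hk]
      exact Int.natAbs_pos.mpr hdet
    have hsup : (_root_.gram T).det.natAbs ⊔ 1 = k := by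
      rw [hk]; exact max_eq_left hk1
    obtain ⟨r, hr⟩ : k ∣ ∏ T ∈ A.powerset, ((_root_.gram T).det.natAbs ⊔ 1) := by
      rw [← hsup]
      exact Finset.dvd_prod_of_mem _ hTp
    rw [natCast_zsmul, hr, mul_comm, mul_smul]
    apply nsmul_mem
    rw [← natCast_zsmul x k]
    exact hmem
end
end

section
/- Let S ⊆ ℤ^m be a vector monoid (a subsemigroup of (ℤ^m,+) containing 0), A ⊆ S a finite subset, C = cone(A), and S_C = S ∩ C. If −x ∈ C for every x ∈ A, then there exists a finite set T ⊆ S_C such that S_C = T + gp(A); moreover S_C is a group, so S_C = S_C ∩ (−S_C) = gp(S_C). -/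
open Set Filter Topology MeasureTheory ProbabilityTheory Pointwise

noncomputable section

/-- `S_C = S ∩ cone(A)` (the integer points of `S` lying in the real cone of `A`). -/
def SC {m : ℕ} (S : Set (Fin m → ℤ)) (A : Finset (Fin m → ℤ)) : Set (Fin m → ℤ) :=
  {x ∈ S | zc x ∈ coneHull (zc '' (A : Set (Fin m → ℤ)))}

section lemmas

variable {m : ℕ} {A : Set (Fin m → ℝ)}

lemma mem_coneHull_of_mem {a : Fin m → ℝ} (ha : a ∈ A) : a ∈ coneHull A :=
  ⟨{a}, fun _ => 1, by simpa using ha, by simp, by simp⟩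

lemma coneHull_zero_mem : (0 : Fin m → ℝ) ∈ coneHull A :=
  ⟨∅, fun _ => 0, by simp, by simp, by simp⟩

lemma coneHull_add_mem {x y : Fin m → ℝ} (hx : x ∈ coneHull A) (hy : y ∈ coneHull A) :
    x + y ∈ coneHull A := by
  obtain ⟨s1, w1, hs1, hw1, rfl⟩ := hx
  obtain ⟨s2, w2, hs2, hw2, rfl⟩ := hy
  refine ⟨s1 ∪ s2, fun a => (if a ∈ s1 then w1 a else 0) + (if a ∈ s2 then w2 a else 0),
    by simp [Finset.coe_union, Set.union_subset hs1 hs2], ?_, ?_⟩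
  · intro a _
    have h1 : (0:ℝ) ≤ if a ∈ s1 then w1 a else 0 := by split <;> simp_all [hw1]
    have h2 : (0:ℝ) ≤ if a ∈ s2 then w2 a else 0 := by split <;> simp_all [hw2]
    exact add_nonneg h1 h2
  · have e1 : ∑ a ∈ s1 ∪ s2, (if a ∈ s1 then w1 a else 0) • a = ∑ a ∈ s1, w1 a • a := by
      simp only [ite_smul, zero_smul, Finset.sum_ite_mem, Finset.union_inter_cancel_left]
    have e2 : ∑ a ∈ s1 ∪ s2, (if a ∈ s2 then w2 a else 0) • a = ∑ a ∈ s2, w2 a • a := by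
      simp only [ite_smul, zero_smul, Finset.sum_ite_mem, Finset.union_inter_cancel_right]
    rw [← e1, ← e2, ← Finset.sum_add_distrib]
    exact Finset.sum_congr rfl fun a _ => by rw [add_smul]

lemma coneHull_smul_mem {c : ℝ} {x : Fin m → ℝ} (hc : 0 ≤ c) (hx : x ∈ coneHull A) :
    c • x ∈ coneHull A := by
  obtain ⟨s, w, hs, hw, rfl⟩ := hx
  exact ⟨s, fun a => c * w a, hs, fun a ha => mul_nonneg hc (hw a ha), by
    rw [Finset.smul_sum]; exact Finset.sum_congr rfl fun a _ => by rw [smul_smul]⟩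

lemma coneHull_neg_mem (hneg : ∀ a ∈ A, -a ∈ coneHull A) {x : Fin m → ℝ}
    (hx : x ∈ coneHull A) : -x ∈ coneHull A := by
  obtain ⟨s, w, hs, hw, rfl⟩ := hx
  rw [← Finset.sum_neg_distrib]
  have : ∀ a ∈ s, -(w a • a) ∈ coneHull A := by
    intro a ha
    rw [← smul_neg]
    exact coneHull_smul_mem (hw a ha) (hneg a (hs ha))
  exact Finset.sum_induction _ _ (fun _ _ => coneHull_add_mem) coneHull_zero_mem this

lemma coneHull_subset_span : coneHull A ⊆ (Submodule.span ℝ A : Set (Fin m → ℝ)) := by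
  rintro x ⟨s, w, hs, hw, rfl⟩
  exact Submodule.sum_mem _ fun a ha =>
    Submodule.smul_mem _ _ (Submodule.subset_span (hs ha))

lemma coneHull_eq_span (hneg : ∀ a ∈ A, -a ∈ coneHull A) :
    coneHull A = (Submodule.span ℝ A : Set (Fin m → ℝ)) := by
  refine Subset.antisymm coneHull_subset_span ?_
  intro x hx
  induction hx using Submodule.span_induction with
  | mem a ha => exact mem_coneHull_of_mem ha
  | zero => exact coneHull_zero_mem
  | add x y _ _ hx hy => exact coneHull_add_mem hx hy
  | smul c x _ hx =>
      rcases le_or_gt 0 c with hc | hc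
      · exact coneHull_smul_mem hc hx
      · have : c • x = (-c) • (-x) := by rw [neg_smul, smul_neg, neg_neg]
        rw [this]
        exact coneHull_smul_mem (by linarith) (coneHull_neg_mem hneg hx)

end lemmas

section carath

variable {m : ℕ} {A : Set (Fin m → ℝ)}

lemma caratheodory_aux (n : ℕ) :
    ∀ s : Finset (Fin m → ℝ), s.card ≤ n → ∀ w : (Fin m → ℝ) → ℝ,
      (∀ a ∈ s, 0 ≤ w a) → ∀ x : Fin m → ℝ, x = ∑ a ∈ s, w a • a → ↑s ⊆ A →
      ∃ (t : Finset (Fin m → ℝ)) (v : (Fin m → ℝ) → ℝ), ↑t ⊆ A ∧ (∀ a ∈ t, 0 ≤ v a) ∧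
        x = ∑ a ∈ t, v a • a ∧ LinearIndependent ℝ ((↑) : t → (Fin m → ℝ)) := by
  induction n with
  | zero =>
      intro s hcard w hw x hx hsA
      have hs : s = ∅ := Finset.card_eq_zero.mp (Nat.le_zero.mp hcard)
      subst hs
      refine ⟨∅, w, by simp, by simp, by simpa using hx, ?_⟩
      exact linearIndependent_empty_type
  | succ n ih =>
      intro s hcard w hw x hx hsA
      by_cases hli : LinearIndependent ℝ ((↑) : s → (Fin m → ℝ))
      · exact ⟨s, w, hsA, hw, hx, hli⟩
      obtain ⟨g, hgsum, i, hgi⟩ := Fintype.not_linearIndependent_iff.mp hli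
      set σ : ℝ := if 0 < g i then 1 else -1 with hσ
      set G : (Fin m → ℝ) → ℝ := fun a => if h : a ∈ s then σ * g ⟨a, h⟩ else 0 with hG
      have hGval : ∀ j : { y // y ∈ s }, G j.1 = σ * g j := by
        intro j
        simp only [hG, j.2, dif_pos]
      have hGsum : ∑ a ∈ s, G a • a = 0 := by
        rw [← Finset.sum_attach s (fun a => G a • a)]
        have : ∀ j ∈ s.attach, G j.1 • j.1 = σ • (g j • (j : Fin m → ℝ)) := by
          intro j _
          rw [hGval j, smul_smul]
        rw [Finset.sum_congr rfl this, ← Finset.smul_sum, ← Finset.univ_eq_attach, hgsum,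
          smul_zero]
      have hex : 0 < G i.1 := by
        rw [hGval i]
        rcases lt_trichotomy (g i) 0 with h | h | h
        · have : σ = -1 := by rw [hσ, if_neg (by linarith)]
          rw [this]; nlinarith
        · exact absurd h hgi
        · have : σ = 1 := by rw [hσ, if_pos h]
          rw [this]; nlinarith
      set P : Finset (Fin m → ℝ) := s.filter (fun a => 0 < G a) with hP
      have hPne : P.Nonempty := ⟨i.1, by simp [hP, i.2, hex]⟩
      obtain ⟨a0, ha0P, hmin⟩ := P.exists_min_image (fun a => w a / G a) hPne
      have ha0s : a0 ∈ s := (Finset.mem_filter.mp ha0P).1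
      have hGa0 : 0 < G a0 := (Finset.mem_filter.mp ha0P).2
      set t : ℝ := w a0 / G a0 with ht
      have ht0 : 0 ≤ t := div_nonneg (hw a0 ha0s) hGa0.le
      set w' : (Fin m → ℝ) → ℝ := fun a => w a - t * G a with hw'def
      have hw' : ∀ a ∈ s, 0 ≤ w' a := by
        intro a ha
        by_cases hGa : 0 < G a
        · have haP : a ∈ P := Finset.mem_filter.mpr ⟨ha, hGa⟩
          have := hmin a haP
          have h2 : t * G a ≤ w a := by
            rw [ht]
            calc w a0 / G a0 * G a ≤ w a / G a * G a := by
                  apply mul_le_mul_of_nonneg_right this hGa.le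
              _ = w a := div_mul_cancel₀ _ (ne_of_gt hGa)
          simp only [hw'def]; linarith
        · push_neg at hGa
          have : t * G a ≤ 0 := mul_nonpos_of_nonneg_of_nonpos ht0 hGa
          have := hw a ha
          simp only [hw'def]; linarith
      have hw'a0 : w' a0 = 0 := by
        simp only [hw'def, ht]
        field_simp
        ring
      have hsum' : x = ∑ a ∈ s, w' a • a := by
        simp only [hw'def, sub_smul, Finset.sum_sub_distrib]
        have : ∑ a ∈ s, (t * G a) • a = t • ∑ a ∈ s, G a • a := by
          rw [Finset.smul_sum]
          exact Finset.sum_congr rfl fun a _ => by rw [smul_smul]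
        rw [this, hGsum, smul_zero, sub_zero, hx]
      have hxe : x = ∑ a ∈ s.erase a0, w' a • a := by
        rw [hsum', ← Finset.add_sum_erase s _ ha0s, hw'a0, zero_smul, zero_add]
      refine ih (s.erase a0) ?_ w' (fun a ha => hw' a (Finset.mem_of_mem_erase ha)) x hxe
        (fun a ha => hsA (Finset.mem_of_mem_erase ha))
      have := Finset.card_erase_of_mem ha0s
      omega

lemma caratheodory {x : Fin m → ℝ} (hx : x ∈ coneHull A) :
    ∃ (t : Finset (Fin m → ℝ)) (v : (Fin m → ℝ) → ℝ), ↑t ⊆ A ∧ (∀ a ∈ t, 0 ≤ v a) ∧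
      x = ∑ a ∈ t, v a • a ∧ LinearIndependent ℝ ((↑) : t → (Fin m → ℝ)) := by
  obtain ⟨s, w, hsA, hw, hxs⟩ := hx
  exact caratheodory_aux s.card s le_rfl w hw x hxs hsA

end carath

section rat

variable {m : ℕ}

/-- Cast an integer vector to a rational vector. -/
def qc {m : ℕ} (x : Fin m → ℤ) : Fin m → ℚ := fun i => (x i : ℚ)

lemma qc_injective : Function.Injective (qc (m := m)) := by
  intro x y h
  funext i
  have := congrFun h i
  simpa [qc] using this

lemma zc_injective : Function.Injective (zc (m := m)) := by
  intro x y h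
  funext i
  have := congrFun h i
  simpa [zc] using this

lemma qc_add (x y : Fin m → ℤ) : qc (x + y) = qc x + qc y := by
  funext i; simp [qc]

lemma zc_neg (x : Fin m → ℤ) : zc (-x) = -zc x := by
  funext i; simp [zc]

lemma zc_add (x y : Fin m → ℤ) : zc (x + y) = zc x + zc y := by
  funext i; simp [zc]

lemma zc_zero : zc (0 : Fin m → ℤ) = 0 := by
  funext i; simp [zc]

/-- Rational descent: a real linear combination with integral data can be made rational. -/
lemma rat_descent (B : Finset (Fin m → ℤ)) (x : Fin m → ℤ)
    (hx : zc x ∈ Submodule.span ℝ (zc '' (B : Set (Fin m → ℤ)))) :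
    qc x ∈ Submodule.span ℚ (qc '' (B : Set (Fin m → ℤ))) := by
  by_contra hq
  obtain ⟨f, hfx, hf0⟩ := Submodule.exists_dual_map_eq_bot_of_notMem hq inferInstance
  set c : Fin m → ℚ := fun i => f (fun j => if i = j then 1 else 0) with hc
  have hfval : ∀ y : Fin m → ℚ, f y = ∑ i, y i * c i := by
    intro y
    conv_lhs => rw [pi_eq_sum_univ y]
    rw [map_sum]
    exact Finset.sum_congr rfl fun i _ => by rw [LinearMap.map_smul, smul_eq_mul, hc]
  -- the corresponding real functional
  set gR : (Fin m → ℝ) →ₗ[ℝ] ℝ := ∑ i, (c i : ℝ) • LinearMap.proj i with hgR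
  have hgRval : ∀ y : Fin m → ℝ, gR y = ∑ i, y i * (c i : ℝ) := by
    intro y
    rw [hgR]
    simp [LinearMap.sum_apply, LinearMap.smul_apply, LinearMap.proj_apply, mul_comm]
  have hker : Submodule.span ℝ (zc '' (B : Set (Fin m → ℤ))) ≤ LinearMap.ker gR := by
    rw [Submodule.span_le]
    rintro _ ⟨b, hb, rfl⟩
    have hfb : f (qc b) = 0 := by
      have : f (qc b) ∈ Submodule.map f (Submodule.span ℚ (qc '' (B : Set (Fin m → ℤ)))) :=
        Submodule.mem_map_of_mem (Submodule.subset_span ⟨b, hb, rfl⟩)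
      rw [hf0] at this
      simpa using this
    have hfb' : ∑ i, (b i : ℚ) * c i = 0 := by rw [← hfb, hfval]; rfl
    have : gR (zc b) = 0 := by
      rw [hgRval]
      have h3 : ∀ i, zc b i * ((c i : ℚ) : ℝ) = (((b i : ℚ) * c i : ℚ) : ℝ) := by
        intro i; push_cast [zc]; ring
      rw [Finset.sum_congr rfl fun i _ => h3 i, ← Rat.cast_sum, hfb', Rat.cast_zero]
    simpa [LinearMap.mem_ker] using this
  have h1 : gR (zc x) = 0 := by
    have := hker hx
    simpa [LinearMap.mem_ker] using this
  have h2 : f (qc x) = 0 := by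
    have : ((f (qc x) : ℚ) : ℝ) = gR (zc x) := by
      rw [hfval, hgRval, Rat.cast_sum]
      refine Finset.sum_congr rfl fun i _ => ?_
      push_cast [zc, qc]
      ring
    rw [h1] at this
    exact_mod_cast this
  exact hfx h2

end rat

section key

variable {m : ℕ}

lemma rat_clear (B : Finset (Fin m → ℤ)) (μ : (Fin m → ℤ) → ℚ) :
    ∃ N : ℕ, 0 < N ∧ ∃ z : (Fin m → ℤ) → ℤ, ∀ b ∈ B, (z b : ℚ) = (N : ℚ) * μ b := by
  classical
  refine ⟨∏ b ∈ B, (μ b).den, Finset.prod_pos (fun b _ => (μ b).pos), ?_⟩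
  have key : ∀ b ∈ B, ∃ zb : ℤ, (zb : ℚ) = ((∏ c ∈ B, (μ c).den : ℕ) : ℚ) * μ b := by
    intro b hb
    obtain ⟨k, hk⟩ := Finset.dvd_prod_of_mem (fun c => (μ c).den) hb
    refine ⟨(k : ℤ) * (μ b).num, ?_⟩
    have hden : ((μ b).den : ℚ) * μ b = (μ b).num := Rat.den_mul_eq_num _
    push_cast [hk]
    linear_combination (-(k : ℚ)) * hden
  refine ⟨fun b => if hb : b ∈ B then (key b hb).choose else 0, fun b hb => ?_⟩
  simp only [dif_pos hb]
  exact (key b hb).choose_spec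

lemma finset_li_coeff {t : Finset (Fin m → ℝ)}
    (hli : LinearIndependent ℝ ((↑) : t → (Fin m → ℝ)))
    {c : (Fin m → ℝ) → ℝ} (h : ∑ a ∈ t, c a • a = 0) : ∀ a ∈ t, c a = 0 := by
  have key := linearIndependent_iff'.mp hli Finset.univ (fun j => c j.1) ?_
  · intro a ha; exact key ⟨a, ha⟩ (Finset.mem_univ _)
  · rw [Finset.univ_eq_attach, Finset.sum_attach t (fun a => c a • a)]
    exact h

lemma int_cone_mult (AZ : Finset (Fin m → ℤ)) (x : Fin m → ℤ)
    (hx : zc x ∈ coneHull (zc '' (AZ : Set (Fin m → ℤ)))) :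
    ∃ N : ℕ, 0 < N ∧ ∃ c : (Fin m → ℤ) → ℕ, (N : ℤ) • x = ∑ a ∈ AZ, (c a : ℤ) • a := by
  classical
  obtain ⟨t, v, htA, hv, hxt, hli⟩ := caratheodory hx
  set B : Finset (Fin m → ℤ) := AZ.filter (fun b => zc b ∈ t) with hB
  have hBsub : B ⊆ AZ := Finset.filter_subset _ _
  have hBt : ∀ b ∈ B, zc b ∈ t := fun b hb => (Finset.mem_filter.mp hb).2
  have himg : B.image zc = t := by
    apply Finset.Subset.antisymm
    · intro a ha
      obtain ⟨b, hb, rfl⟩ := Finset.mem_image.mp ha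
      exact hBt b hb
    · intro a ha
      obtain ⟨b, hb, rfl⟩ := htA (Finset.mem_coe.mpr ha)
      exact Finset.mem_image.mpr ⟨b, Finset.mem_filter.mpr ⟨Finset.mem_coe.mp hb, ha⟩, rfl⟩
  have hsumB : ∀ f : (Fin m → ℝ) → ℝ, ∑ a ∈ t, f a • a = ∑ b ∈ B, f (zc b) • zc b := by
    intro f
    rw [← himg, Finset.sum_image (fun b _ c _ h => zc_injective h)]
  have hxB : zc x = ∑ b ∈ B, v (zc b) • zc b := by rw [hxt, hsumB]
  have hxsp : zc x ∈ Submodule.span ℝ (zc '' (B : Set (Fin m → ℤ))) := by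
    rw [hxB]
    exact Submodule.sum_mem _ fun b hb =>
      Submodule.smul_mem _ _ (Submodule.subset_span ⟨b, Finset.mem_coe.mpr hb, rfl⟩)
  have hspq := rat_descent B x hxsp
  rw [← Finset.coe_image] at hspq
  obtain ⟨fq, -, hfq⟩ := Submodule.mem_span_finset.mp hspq
  set μ : (Fin m → ℤ) → ℚ := fun b => fq (qc b) with hμ
  have hqx : qc x = ∑ b ∈ B, μ b • qc b := by
    rw [← hfq, Finset.sum_image (fun b _ c _ h => qc_injective h)]
  -- coefficients match
  set inv : (Fin m → ℝ) → (Fin m → ℤ) := Function.invFun (zc (m := m)) with hinv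
  have hinvz : ∀ b : Fin m → ℤ, inv (zc b) = b :=
    fun b => Function.leftInverse_invFun zc_injective b
  set d : (Fin m → ℝ) → ℝ := fun a => v a - ((μ (inv a) : ℚ) : ℝ) with hd
  have hreal : zc x = ∑ b ∈ B, ((μ b : ℚ) : ℝ) • zc b := by
    funext i
    have h1 := congrFun hqx i
    rw [Finset.sum_apply] at h1
    simp only [Pi.smul_apply, smul_eq_mul, qc] at h1
    have h2 : ((qc x i : ℚ) : ℝ) = ((∑ b ∈ B, μ b * (b i : ℚ) : ℚ) : ℝ) := by
      rw [← h1]; rfl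
    rw [Rat.cast_sum] at h2
    simp only [Finset.sum_apply, Pi.smul_apply, smul_eq_mul, zc]
    rw [show ((qc x i : ℚ) : ℝ) = ((x i : ℤ) : ℝ) by simp [qc]] at h2
    rw [h2]
    exact Finset.sum_congr rfl fun b _ => by push_cast; ring
  have hdzero : ∑ a ∈ t, d a • a = 0 := by
    rw [hsumB d]
    have : ∀ b ∈ B, d (zc b) • zc b = v (zc b) • zc b - ((μ b : ℚ) : ℝ) • zc b := by
      intro b _
      rw [hd]
      simp only [hinvz b, sub_smul]
    rw [Finset.sum_congr rfl this, Finset.sum_sub_distrib, ← hxB, ← hreal, sub_self]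
  have hmatch : ∀ b ∈ B, ((μ b : ℚ) : ℝ) = v (zc b) := by
    intro b hb
    have := finset_li_coeff hli hdzero (zc b) (hBt b hb)
    rw [hd] at this
    simp only [hinvz b] at this
    linarith
  have hμnn : ∀ b ∈ B, 0 ≤ μ b := by
    intro b hb
    have h1 : (0 : ℝ) ≤ v (zc b) := hv _ (hBt b hb)
    rw [← hmatch b hb] at h1
    exact_mod_cast h1
  obtain ⟨N, hN, z, hz⟩ := rat_clear B μ
  have hznn : ∀ b ∈ B, 0 ≤ z b := by
    intro b hb
    have : (0 : ℚ) ≤ (z b : ℚ) := by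
      rw [hz b hb]
      exact mul_nonneg (by positivity) (hμnn b hb)
    exact_mod_cast this
  have hq : qc ((N : ℤ) • x) = qc (∑ b ∈ B, z b • b) := by
    funext i
    simp only [qc, Pi.smul_apply, Finset.sum_apply, smul_eq_mul]
    push_cast
    have h1 := congrFun hqx i
    rw [Finset.sum_apply] at h1
    simp only [Pi.smul_apply, smul_eq_mul, qc] at h1
    rw [show ((x i : ℚ)) = ∑ b ∈ B, μ b * (b i : ℚ) from h1, Finset.mul_sum]
    refine Finset.sum_congr rfl fun b hb => ?_
    rw [hz b hb]
    ring
  have hZ : (N : ℤ) • x = ∑ b ∈ B, z b • b := qc_injective hq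
  refine ⟨N, hN, fun a => if a ∈ B then (z a).toNat else 0, ?_⟩
  rw [hZ]
  have : ∀ a ∈ AZ, (((if a ∈ B then (z a).toNat else 0 : ℕ) : ℤ)) • a
      = (if a ∈ B then z a • a else 0) := by
    intro a _
    by_cases h : a ∈ B
    · simp only [h, if_pos, Int.toNat_of_nonneg (hznn a h)]
    · simp [h]
  rw [Finset.sum_congr rfl this, Finset.sum_ite_mem, Finset.inter_eq_right.mpr hBsub]

end key

/-- if `−x ∈ C` for all `x ∈ A`, then `S_C = T + gp(A)` for some finite
`T ⊆ S_C`, and `S_C` is a group: `S_C = S_C ∩ (−S_C) = gp(S_C)`. -/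
theorem stmt5 {m : ℕ} (S : Set (Fin m → ℤ)) (h0S : (0 : Fin m → ℤ) ∈ S)
    (hSadd : ∀ x ∈ S, ∀ y ∈ S, x + y ∈ S)
    (A : Finset (Fin m → ℤ)) (hAS : (A : Set (Fin m → ℤ)) ⊆ S)
    (hneg : ∀ x ∈ A, -(zc x) ∈ coneHull (zc '' (A : Set (Fin m → ℤ)))) :
    ∃ T : Finset (Fin m → ℤ),
      (T : Set (Fin m → ℤ)) ⊆ SC S A ∧
      SC S A = (T : Set (Fin m → ℤ)) +
        (AddSubgroup.closure (A : Set (Fin m → ℤ)) : Set (Fin m → ℤ)) ∧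
      SC S A = SC S A ∩ (-(SC S A)) ∧
      SC S A = (AddSubgroup.closure (SC S A) : Set (Fin m → ℤ)) := by
  classical
  have hnegA : ∀ a ∈ zc '' (A : Set (Fin m → ℤ)),
      -a ∈ coneHull (zc '' (A : Set (Fin m → ℤ))) := by
    rintro a ⟨b, hb, rfl⟩
    exact hneg b hb
  have hCspan := coneHull_eq_span hnegA
  have hnsmul : ∀ (n : ℕ) (x : Fin m → ℤ), x ∈ S → n • x ∈ S := by
    intro n
    induction n with
    | zero => intro x _; simpa using h0S
    | succ n ih =>
        intro x hx
        rw [succ_nsmul]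
        exact hSadd _ (ih x hx) _ hx
  have hsumS : ∀ c : (Fin m → ℤ) → ℕ, (∑ a ∈ A, (c a : ℤ) • a) ∈ S := by
    intro c
    refine Finset.sum_induction _ (· ∈ S) (fun x y hx hy => hSadd x hx y hy) h0S ?_
    intro a ha
    rw [natCast_zsmul]
    exact hnsmul _ _ (hAS ha)
  have hSCneg : ∀ x ∈ SC S A, -x ∈ SC S A := by
    rintro x ⟨hxS, hxC⟩
    have h1 : zc x ∈ (Submodule.span ℝ (zc '' (A : Set (Fin m → ℤ))) :
        Set (Fin m → ℝ)) := hCspan ▸ hxC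
    have hnegC : zc (-x) ∈ coneHull (zc '' (A : Set (Fin m → ℤ))) := by
      rw [zc_neg, hCspan]
      exact Submodule.neg_mem _ h1
    obtain ⟨N, hN, c, hc⟩ := int_cone_mult A (-x) hnegC
    have hNx : ((N : ℤ) • (-x)) ∈ S := by rw [hc]; exact hsumS c
    have hdecomp : -x = (N : ℤ) • (-x) + ((N : ℤ) - 1) • x := by
      rw [smul_neg, sub_smul, one_smul]
      abel
    have hNm1 : ((N : ℤ) - 1) • x ∈ S := by
      have : ((N : ℤ) - 1) = ((N - 1 : ℕ) : ℤ) := by omega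
      rw [this, natCast_zsmul]
      exact hnsmul _ _ hxS
    refine ⟨?_, hnegC⟩
    rw [hdecomp]
    exact hSadd _ hNx _ hNm1
  have hSCadd : ∀ x ∈ SC S A, ∀ y ∈ SC S A, x + y ∈ SC S A := by
    rintro x ⟨hxS, hxC⟩ y ⟨hyS, hyC⟩
    exact ⟨hSadd x hxS y hyS, by rw [zc_add]; exact coneHull_add_mem hxC hyC⟩
  have hSC0 : (0 : Fin m → ℤ) ∈ SC S A := ⟨h0S, by rw [zc_zero]; exact coneHull_zero_mem⟩
  set G : AddSubgroup (Fin m → ℤ) :=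
    { carrier := SC S A
      add_mem' := fun hx hy => hSCadd _ hx _ hy
      zero_mem' := hSC0
      neg_mem' := fun hx => hSCneg _ hx } with hGdef
  have hGcoe : (G : Set (Fin m → ℤ)) = SC S A := rfl
  have hASC : (A : Set (Fin m → ℤ)) ⊆ SC S A := fun a ha =>
    ⟨hAS ha, mem_coneHull_of_mem ⟨a, ha, rfl⟩⟩
  have hHG : AddSubgroup.closure (A : Set (Fin m → ℤ)) ≤ G :=
    (AddSubgroup.closure_le G).mpr hASC
  have htors : ∀ x ∈ SC S A, ∃ N : ℕ, 0 < N ∧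
      (N : ℤ) • x ∈ AddSubgroup.closure (A : Set (Fin m → ℤ)) := by
    rintro x ⟨hxS, hxC⟩
    obtain ⟨N, hN, c, hc⟩ := int_cone_mult A x hxC
    refine ⟨N, hN, ?_⟩
    rw [hc]
    exact AddSubgroup.sum_mem _ fun a ha =>
      AddSubgroup.zsmul_mem _ (AddSubgroup.subset_closure ha) _
  -- finiteness of the quotient
  haveI hMF : Module.Finite ℤ (AddSubgroup.toIntSubmodule G) :=
    Module.Finite.iff_fg.mpr (IsNoetherian.noetherian _)
  haveI hFGG : AddGroup.FG G := Module.Finite.iff_addGroup_fg.mp hMF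
  set K : AddSubgroup G := (AddSubgroup.closure (A : Set (Fin m → ℤ))).addSubgroupOf G with hK
  haveI hfin : Finite (G ⧸ K) := by
    apply AddCommGroup.finite_of_fg_torsion
    intro q
    induction q using QuotientAddGroup.induction_on with
    | H g =>
      obtain ⟨N, hN, hNg⟩ := htors (g : Fin m → ℤ) g.2
      rw [isOfFinAddOrder_iff_nsmul_eq_zero]
      refine ⟨N, hN, ?_⟩
      have h1 : (N • (g : G) : G ⧸ K) = ((N • g : G) : G ⧸ K) := rfl
      rw [show N • ((g : G) : G ⧸ K) = ((N • g : G) : G ⧸ K) from rfl]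
      rw [QuotientAddGroup.eq_zero_iff]
      rw [AddSubgroup.mem_addSubgroupOf]
      have h2 : ((N • g : G) : Fin m → ℤ) = N • (g : Fin m → ℤ) := rfl
      rw [h2, ← natCast_zsmul]
      exact hNg
  haveI := Fintype.ofFinite (G ⧸ K)
  refine ⟨Finset.univ.image (fun q : G ⧸ K => ((Quotient.out q : G) : Fin m → ℤ)), ?_, ?_, ?_, ?_⟩
  · intro x hx
    obtain ⟨q, _, rfl⟩ := Finset.mem_image.mp hx
    exact (Quotient.out q : G).2
  · ext x
    constructor
    · intro hx
      set g : G := ⟨x, hx⟩ with hg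
      set q : G ⧸ K := QuotientAddGroup.mk g with hq
      set t : G := Quotient.out q with hot
      have hmk : (QuotientAddGroup.mk t : G ⧸ K) = QuotientAddGroup.mk g :=
        QuotientAddGroup.out_eq' q
      have hmem : -t + g ∈ K := (QuotientAddGroup.eq).mp hmk
      rw [hK, AddSubgroup.mem_addSubgroupOf] at hmem
      have hcoe : ((-t + g : G) : Fin m → ℤ) = -(t : Fin m → ℤ) + x := rfl
      rw [hcoe] at hmem
      refine Set.mem_add.mpr ⟨(t : Fin m → ℤ), ?_, -(t : Fin m → ℤ) + x, hmem, by abel⟩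
      exact Finset.mem_coe.mpr (Finset.mem_image.mpr ⟨q, Finset.mem_univ _, rfl⟩)
    · intro hx
      obtain ⟨a, ha, b, hb, rfl⟩ := Set.mem_add.mp hx
      have haG : a ∈ SC S A := by
        obtain ⟨q, _, rfl⟩ := Finset.mem_image.mp (Finset.mem_coe.mp ha)
        exact (Quotient.out q : G).2
      exact hSCadd a haG b (hHG hb)
  · refine Set.Subset.antisymm (fun x hx => ⟨hx, ?_⟩) Set.inter_subset_left
    rw [Set.mem_neg]
    exact hSCneg x hx
  · have h1 : AddSubgroup.closure (SC S A) = G := by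
      rw [← hGcoe]
      exact AddSubgroup.closure_eq G
    rw [h1, hGcoe]
end
end

section
/- Let S ⊆ ℤ^m be a vector semigroup and O = rint(cone(S)). If 0 ∈ O then S is a group, i.e., −x ∈ S for all x ∈ S. -/
open Set Filter Topology MeasureTheory ProbabilityTheory Pointwise

noncomputable section

lemma zero_mem_coneHull {m : ℕ} (A : Set (Fin m → ℝ)) : (0 : Fin m → ℝ) ∈ coneHull A :=
  ⟨∅, 0, by simp, by simp, by simp⟩

lemma mem_coneHull_self {m : ℕ} {A : Set (Fin m → ℝ)} {a : Fin m → ℝ} (ha : a ∈ A) :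
    a ∈ coneHull A :=
  ⟨{a}, fun _ => 1, by simpa, by simp, by simp⟩

lemma mem_coneHull_of_smul {m : ℕ} {A : Set (Fin m → ℝ)} {v : Fin m → ℝ} {t : ℝ}
    (ht : 0 < t) (h : t • v ∈ coneHull A) : v ∈ coneHull A := by
  obtain ⟨s, w, hsA, hw, heq⟩ := h
  refine ⟨s, fun a => t⁻¹ * w a, hsA, fun a ha => mul_nonneg (by positivity) (hw a ha), ?_⟩
  have : v = t⁻¹ • (t • v) := by rw [smul_smul, inv_mul_cancel₀ ht.ne', one_smul]
  rw [this, heq, Finset.smul_sum]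
  simp [smul_smul]

-- step 1: from intrinsic interior, -zc x ∈ coneHull
lemma neg_mem_coneHull {m : ℕ} (S : Set (Fin m → ℤ))
    (h0 : (0 : Fin m → ℝ) ∈ intrinsicInterior ℝ (coneHull (zc '' S)))
    {x : Fin m → ℤ} (hx : x ∈ S) : -zc x ∈ coneHull (zc '' S) := by
  set C := coneHull (zc '' S) with hC
  obtain ⟨y, hy, hy0⟩ := h0
  have h0C : (0 : Fin m → ℝ) ∈ affineSpan ℝ C :=
    subset_affineSpan ℝ C (zero_mem_coneHull _)
  have hxC : zc x ∈ affineSpan ℝ C :=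
    subset_affineSpan ℝ C (mem_coneHull_self ⟨x, hx, rfl⟩)
  have hmem : ∀ t : ℝ, t • (-zc x) ∈ affineSpan ℝ C := by
    intro t
    have := (affineSpan ℝ C).smul_vsub_vadd_mem t h0C hxC h0C
    simpa [vsub_eq_sub, smul_sub] using this
  set f : ℝ → affineSpan ℝ C := fun t => ⟨t • (-zc x), hmem t⟩ with hf
  have hfc : Continuous f := by
    apply Continuous.subtype_mk
    exact continuous_id.smul continuous_const
  have hf0 : f 0 = y := by
    apply Subtype.ext
    simp [hf, hy0]
  have : f ⁻¹' (interior ((↑) ⁻¹' C)) ∈ nhds (0 : ℝ) := by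
    apply hfc.continuousAt.preimage_mem_nhds
    rw [hf0]
    exact isOpen_interior.mem_nhds hy
  obtain ⟨ε, hε, hball⟩ := Metric.mem_nhds_iff.mp this
  have hmem2 : f (ε/2) ∈ interior ((↑) ⁻¹' C) := by
    apply hball
    simp only [Metric.mem_ball, Real.dist_eq, sub_zero]
    rw [abs_of_pos (by linarith)]
    linarith
  have h3 : f (ε/2) ∈ ((↑) ⁻¹' C : Set (affineSpan ℝ C)) := interior_subset hmem2
  have : (ε/2) • (-zc x) ∈ C := h3
  exact mem_coneHull_of_smul (by linarith) this

lemma cara_aux {m : ℕ} (A : Set (Fin m → ℝ)) (v : Fin m → ℝ) :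
    ∀ (n : ℕ) (s : Finset (Fin m → ℝ)) (w : (Fin m → ℝ) → ℝ), s.card ≤ n →
    ↑s ⊆ A → (∀ a ∈ s, 0 ≤ w a) → v = ∑ a ∈ s, w a • a →
    ∃ (t : Finset (Fin m → ℝ)) (u : (Fin m → ℝ) → ℝ),
      ↑t ⊆ A ∧ (∀ a ∈ t, 0 ≤ u a) ∧ v = ∑ a ∈ t, u a • a ∧
      LinearIndependent ℝ (fun a : t => (a : Fin m → ℝ)) := by
  intro n
  induction n with
  | zero =>
    intro s w hcard hsA hw heq
    refine ⟨s, w, hsA, hw, heq, ?_⟩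
    have : s = ∅ := Finset.card_eq_zero.mp (Nat.le_zero.mp hcard)
    subst this
    exact linearIndependent_empty_type
  | succ n ih =>
    intro s w hcard hsA hw heq
    by_cases hind : LinearIndependent ℝ (fun a : s => (a : Fin m → ℝ))
    · exact ⟨s, w, hsA, hw, heq, hind⟩
    · obtain ⟨g, hgsum, i, hgi⟩ := Fintype.not_linearIndependent_iff.mp hind
      -- WLOG some coordinate of g is positive
      obtain ⟨g, hgsum, i, hgi⟩ : ∃ g : s → ℝ, ∑ j, g j • (j : Fin m → ℝ) = 0 ∧
          ∃ i, 0 < g i := by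
        rcases lt_or_gt_of_ne hgi with h | h
        · exact ⟨-g, by simpa [neg_smul] using congrArg Neg.neg hgsum, i, by simpa using h⟩
        · exact ⟨g, hgsum, i, h⟩
      -- minimize w a / g a over positive g
      have hne : (Finset.univ.filter (fun j : s => 0 < g j)).Nonempty :=
        ⟨i, by simp [hgi]⟩
      obtain ⟨i₀, hi₀mem, hi₀min⟩ :=
        Finset.exists_min_image _ (fun j : s => w j / g j) hne
      simp only [Finset.mem_filter, Finset.mem_univ, true_and] at hi₀mem
      set t : ℝ := w i₀ / g i₀ with ht
      have ht0 : 0 ≤ t := div_nonneg (hw _ i₀.2) hi₀mem.le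
      classical
      set u : (Fin m → ℝ) → ℝ := fun a => if h : a ∈ s then w a - t * g ⟨a, h⟩ else 0 with hu
      have hu_i₀ : u (i₀ : Fin m → ℝ) = 0 := by
        simp only [hu, dif_pos i₀.2, Subtype.coe_eta]
        rw [ht, div_mul_cancel₀ _ hi₀mem.ne', sub_self]
      have hu_nonneg : ∀ a ∈ s, 0 ≤ u a := by
        intro a ha
        simp only [hu, dif_pos ha]
        rcases le_or_gt (g ⟨a, ha⟩) 0 with h | h
        · have : t * g ⟨a, ha⟩ ≤ 0 := mul_nonpos_of_nonneg_of_nonpos ht0 h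
          have := hw a ha; linarith
        · have hmin := hi₀min ⟨a, ha⟩ (by simp [h])
          rw [div_le_div_iff₀ hi₀mem h] at hmin
          have h2 : t * g ⟨a, ha⟩ ≤ w a := by
            rw [ht, div_mul_eq_mul_div, div_le_iff₀ hi₀mem]
            simpa using hmin
          linarith
      have hsum : v = ∑ a ∈ s, u a • a := by
        have h1 : ∑ a ∈ s, u a • a = ∑ a ∈ s, w a • a - t • ∑ j : s, g j • (j : Fin m → ℝ) := by
          rw [Finset.smul_sum, ← Finset.sum_coe_sort s (fun a => w a • a),
            ← Finset.sum_coe_sort s (fun a => u a • a), ← Finset.sum_sub_distrib]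
          apply Finset.sum_congr rfl
          intro j _
          simp only [hu, dif_pos j.2, Subtype.coe_eta]
          rw [sub_smul, smul_smul]
        rw [h1, hgsum, smul_zero, sub_zero]; exact heq
      have hsum' : v = ∑ a ∈ s.erase (i₀ : Fin m → ℝ), u a • a := by
        rw [Finset.sum_erase s (f := fun a => u a • a) (a := (i₀ : Fin m → ℝ))
          (by simp only [hu_i₀, zero_smul])]
        exact hsum
      refine ih (s.erase _) u ?_
        ((Finset.coe_subset.mpr (Finset.erase_subset _ _)).trans hsA) ?_ hsum'
      · have := Finset.card_erase_lt_of_mem i₀.2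
        omega
      · intro a ha
        exact hu_nonneg a (Finset.mem_of_mem_erase ha)

lemma rat_coeffs {m : ℕ} (s : Finset (Fin m → ℝ)) (b : ↥s → (Fin m → ℤ))
    (hb : ∀ i : ↥s, zc (b i) = ↑i)
    (indep : LinearIndependent ℝ (fun a : ↥s => (a : Fin m → ℝ)))
    (w : ↥s → ℝ) (z : Fin m → ℤ)
    (heq : zc z = ∑ i : ↥s, w i • (i : Fin m → ℝ)) :
    ∃ q : ↥s → ℚ, ∀ i, (q i : ℝ) = w i := by
  classical
  set Gq : Matrix ↥s ↥s ℚ := Matrix.of fun i j => ∑ k, (b i k : ℚ) * (b j k : ℚ) with hGq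
  set GR : Matrix ↥s ↥s ℝ := Gq.map (algebraMap ℚ ℝ) with hGR
  have hGRent : ∀ i j : ↥s, GR i j = ∑ k, (i : Fin m → ℝ) k * (j : Fin m → ℝ) k := by
    intro i j
    simp only [hGR, Matrix.map_apply, hGq, Matrix.of_apply]
    rw [← hb i, ← hb j]
    simp only [zc]
    push_cast
    rfl
  -- injectivity of GR.mulVec
  have hinj0 : ∀ c : ↥s → ℝ, GR.mulVec c = 0 → c = 0 := by
    intro c hc
    set uvec : Fin m → ℝ := ∑ i : ↥s, c i • (i : Fin m → ℝ) with huvec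
    have key : ∑ k, uvec k ^ 2 = dotProduct c (GR.mulVec c) := by
      simp only [dotProduct, Matrix.mulVec, hGRent, huvec, Finset.sum_apply,
        Pi.smul_apply, smul_eq_mul, pow_two, Finset.mul_sum, Finset.sum_mul]
      rw [Finset.sum_comm]
      apply Finset.sum_congr rfl
      intro i _
      rw [Finset.sum_comm]
      apply Finset.sum_congr rfl
      intro j _
      apply Finset.sum_congr rfl
      intro k _
      ring
    rw [hc, dotProduct_zero] at key
    have huz : uvec = 0 := by
      funext k
      have h1 : ∀ k' ∈ Finset.univ, (0:ℝ) ≤ uvec k' ^ 2 := fun k' _ => sq_nonneg _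
      have := (Finset.sum_eq_zero_iff_of_nonneg h1).mp key k (Finset.mem_univ k)
      exact pow_eq_zero_iff (by norm_num) |>.mp this
    funext i
    exact Fintype.linearIndependent_iff.mp indep c (by rw [← huvec]; exact huz) i
  have hinj : Function.Injective (GR.mulVec) := by
    intro u v huv
    have : GR.mulVec (u - v) = 0 := by
      rw [Matrix.mulVec_sub, huv, sub_self]
    have := hinj0 _ this
    exact sub_eq_zero.mp this
  -- determinant nonzero
  have hdet : Gq.det ≠ 0 := by
    intro h
    have hdR : GR.det = 0 := by
      rw [hGR, ← RingHom.mapMatrix_apply, ← RingHom.map_det, h, map_zero]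
    obtain ⟨c, hc0, hcz⟩ := Matrix.exists_mulVec_eq_zero_iff.mpr hdR
    exact hc0 (hinj0 c hcz)
  -- the real equation
  set yq : ↥s → ℚ := fun i => ∑ k, (b i k : ℚ) * (z k : ℚ) with hyq
  have hGRw : GR.mulVec w = fun i => ((yq i : ℚ) : ℝ) := by
    funext i
    simp only [Matrix.mulVec, dotProduct, hGRent, hyq]
    push_cast
    rw [← hb i]
    have hzk : ∀ k, (z k : ℝ) = ∑ j : ↥s, w j * (j : Fin m → ℝ) k := by
      intro k
      have := congrFun heq k
      simpa [zc, Finset.sum_apply] using this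
    simp only [zc]
    calc ∑ j : ↥s, (∑ k, (b i k : ℝ) * (j : Fin m → ℝ) k) * w j
        = ∑ j : ↥s, ∑ k, (b i k : ℝ) * (w j * (j : Fin m → ℝ) k) := by
          apply Finset.sum_congr rfl; intro j _; rw [Finset.sum_mul]
          apply Finset.sum_congr rfl; intro k _; ring
      _ = ∑ k, ∑ j : ↥s, (b i k : ℝ) * (w j * (j : Fin m → ℝ) k) := Finset.sum_comm
      _ = ∑ k, (b i k : ℝ) * (z k : ℝ) := by
          apply Finset.sum_congr rfl; intro k _
          rw [← Finset.mul_sum, hzk k]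
  -- rational solution
  set q : ↥s → ℚ := Gq⁻¹.mulVec yq with hq
  have hGqq : Gq.mulVec q = yq := by
    rw [hq, Matrix.mulVec_mulVec, Matrix.mul_nonsing_inv _ (isUnit_iff_ne_zero.mpr hdet),
      Matrix.one_mulVec]
  have hGRq : GR.mulVec (fun i => ((q i : ℚ) : ℝ)) = fun i => ((yq i : ℚ) : ℝ) := by
    funext i
    have := (algebraMap ℚ ℝ).map_mulVec Gq q i
    rw [hGqq] at this
    exact this.symm
  have : w = fun i => ((q i : ℚ) : ℝ) := hinj (hGRw.trans hGRq.symm)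
  exact ⟨q, fun i => (congrFun this i).symm⟩

lemma nsmul_mem' {m : ℕ} {S : Set (Fin m → ℤ)}
    (hSadd : ∀ x ∈ S, ∀ y ∈ S, x + y ∈ S) {x : Fin m → ℤ} (hx : x ∈ S) :
    ∀ n : ℕ, (n + 1) • x ∈ S := by
  intro n
  induction n with
  | zero => simpa using hx
  | succ n ih =>
    have : (n + 1 + 1) • x = (n + 1) • x + x := by rw [succ_nsmul]
    rw [this]
    exact hSadd _ ih _ hx

lemma sum_mem_or_zero {m : ℕ} {S : Set (Fin m → ℤ)}
    (hSadd : ∀ x ∈ S, ∀ y ∈ S, x + y ∈ S) {ι : Type*} (t : Finset ι)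
    (k : ι → ℕ) (b : ι → Fin m → ℤ) (hb : ∀ i ∈ t, b i ∈ S) :
    (∑ i ∈ t, k i • b i) ∈ S ∨ ∑ i ∈ t, k i • b i = 0 := by
  classical
  induction t using Finset.induction_on with
  | empty => right; simp
  | @insert a t' ha ih =>
    rw [Finset.sum_insert ha]
    have hbt : ∀ i ∈ t', b i ∈ S := fun i hi => hb i (Finset.mem_insert_of_mem hi)
    have hba : b a ∈ S := hb a (Finset.mem_insert_self a t')
    rcases Nat.eq_zero_or_pos (k a) with h0 | hpos
    · rw [h0, zero_smul, zero_add]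
      exact ih hbt
    · obtain ⟨n, hn⟩ := Nat.exists_eq_add_of_lt hpos
      have hhead : k a • b a ∈ S := by
        rw [hn]
        simpa [add_comm] using nsmul_mem' hSadd hba n
      rcases ih hbt with h | h
      · exact Or.inl (hSadd _ hhead _ h)
      · rw [h, add_zero]; exact Or.inl hhead

/-- if `0` lies in the asymptotic cone `O = rint(cone(S))` of a vector
semigroup `S`, then `S` is a group. -/
theorem stmt8 {m : ℕ} (S : Set (Fin m → ℤ)) (hSne : S.Nonempty)
    (hSadd : ∀ x ∈ S, ∀ y ∈ S, x + y ∈ S)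
    (h0 : (0 : Fin m → ℝ) ∈ intrinsicInterior ℝ (coneHull (zc '' S))) :
    ∀ x ∈ S, -x ∈ S := by
  classical
  intro x hx
  have hneg : -zc x ∈ coneHull (zc '' S) := neg_mem_coneHull S h0 hx
  obtain ⟨s0, w0, hsA0, hw0, heq0⟩ := hneg
  obtain ⟨t, u, htA, hu, hequ, hind⟩ :=
    cara_aux (zc '' S) (-zc x) s0.card s0 w0 le_rfl hsA0 hw0 heq0
  have hbex : ∀ i : ↥t, ∃ b : Fin m → ℤ, b ∈ S ∧ zc b = ↑i := by
    intro i
    obtain ⟨b, hbS, hbz⟩ := htA i.2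
    exact ⟨b, hbS, hbz⟩
  choose b hbS hb using hbex
  have hzneg : zc (-x) = -zc x := by funext j; simp [zc]
  have hequ' : zc (-x) = ∑ i : ↥t, u ↑i • (i : Fin m → ℝ) := by
    rw [hzneg, hequ]
    exact (Finset.sum_coe_sort t (fun a => u a • a)).symm
  obtain ⟨q, hq⟩ := rat_coeffs t b hb hind (fun i => u ↑i) (-x) hequ'
  have hqnn : ∀ i : ↥t, 0 ≤ q i := by
    intro i
    have hu' : 0 ≤ u ↑i := hu ↑i i.2
    rw [← hq i] at hu'
    exact_mod_cast hu'
  set N : ℕ := ∏ i : ↥t, (q i).den with hN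
  have hN1 : 0 < N := Finset.prod_pos fun i _ => (q i).pos
  set k : ↥t → ℕ := fun i => (q i).num.toNat * (N / (q i).den) with hk
  have hkq : ∀ i : ↥t, (k i : ℚ) = q i * N := by
    intro i
    have hdvd : (q i).den ∣ N := Finset.dvd_prod_of_mem _ (Finset.mem_univ i)
    have hden : ((q i).den : ℚ) ≠ 0 := Nat.cast_ne_zero.mpr (q i).den_nz
    have h1 : (k i : ℚ) = ((q i).num.toNat : ℚ) * ((N / (q i).den : ℕ) : ℚ) := by
      simp [hk]
    have h2 : ((q i).num.toNat : ℚ) = ((q i).num : ℚ) := by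
      exact_mod_cast congrArg (Int.cast : ℤ → ℚ)
        (Int.toNat_of_nonneg (Rat.num_nonneg.mpr (hqnn i)))
    rw [h1, h2, Nat.cast_div hdvd hden]
    conv_rhs => rw [← Rat.num_div_den (q i)]
    ring
  have hzeq : ∑ i : ↥t, k i • b i = N • (-x) := by
    funext j
    have hco : (-(x j : ℝ)) = ∑ i : ↥t, u ↑i * (i : Fin m → ℝ) j := by
      have h := congrFun hequ' j
      simp only [zc, Finset.sum_apply, Pi.smul_apply, smul_eq_mul, Pi.neg_apply] at h
      push_cast at h
      exact h
    have hcast : ((∑ i : ↥t, k i • b i) j : ℝ) = ((N • (-x) : Fin m → ℤ) j : ℝ) := by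
      have hL : ((∑ i : ↥t, k i • b i) j : ℝ) = ∑ i : ↥t, (k i : ℝ) * ((b i) j : ℝ) := by
        rw [Finset.sum_apply, Int.cast_sum]
        apply Finset.sum_congr rfl
        intro i _
        rw [Pi.smul_apply, nsmul_eq_mul]
        push_cast
        ring
      have hR : ((N • (-x) : Fin m → ℤ) j : ℝ) = (N : ℝ) * (-(x j : ℝ)) := by
        rw [Pi.smul_apply, Pi.neg_apply, nsmul_eq_mul]
        push_cast
        ring
      rw [hL, hR, hco, Finset.mul_sum]
      apply Finset.sum_congr rfl
      intro i _
      have h1 : (k i : ℝ) = (q i : ℝ) * N := by exact_mod_cast congrArg (Rat.cast : ℚ → ℝ) (hkq i)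
      have h2 : ((b i) j : ℝ) = (i : Fin m → ℝ) j := congrFun (hb i) j
      rw [h1, hq i, h2]
      ring
    exact_mod_cast hcast
  clear_value k N
  rcases sum_mem_or_zero hSadd Finset.univ k b (fun i _ => hbS i) with hmem | hzero
  · rw [hzeq] at hmem
    obtain ⟨n, rfl⟩ : ∃ n, N = n + 1 := ⟨N - 1, by omega⟩
    rcases Nat.eq_zero_or_pos n with rfl | hn
    · simpa using hmem
    · obtain ⟨n', rfl⟩ : ∃ n', n = n' + 1 := ⟨n - 1, by omega⟩
      have hx' : (n' + 1) • x ∈ S := nsmul_mem' hSadd hx n'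
      have hsum := hSadd _ hmem _ hx'
      have heqx : (n' + 1 + 1) • (-x) + (n' + 1) • x = -x := by
        funext j
        simp only [Pi.add_apply, Pi.smul_apply, Pi.neg_apply]
        rw [nsmul_eq_mul, nsmul_eq_mul]
        push_cast
        ring
      rwa [heqx] at hsum
  · rw [hzeq] at hzero
    have hx0 : x = 0 := by
      funext j
      have h2 : (N : ℤ) * (-(x j)) = 0 := by
        have := congrFun hzero j
        simpa [Pi.smul_apply, nsmul_eq_mul] using this
      rcases mul_eq_zero.mp h2 with h | h
      · exact absurd h (by exact_mod_cast hN1.ne')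
      · simpa using neg_eq_zero.mp h
    rw [hx0, neg_zero, ← hx0]
    exact hx
end
end
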